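/- arXiv:1507.03737 — 9 statements merged into one kernel-verified Lean document; each statement's English description precedes it below -/
import Mathlib

section
/- Let p be an odd prime, let K be an algebraically closed field of characteristic p, and let c ∈ K with c ≠ 0. Then the polynomial f = (X^p − X)(Y^p − Y) − c is irreducible in the polynomial ring K[X,Y]. -/
section AuxAS
open Polynomial

lemma fixed_of_frobenius {L : Type*} [Field L] {p : ℕ} [Fact p.Prime] [CharP L p]
    {x : L} (hx : x ^ p = x) : ∃ n : ℕ, x = (n : L) := by
  classical
  have hp : p.Prime := Fact.out
  have hp2 : 2 ≤ p := hp.two_le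
  set q : L[X] := X ^ p - X with hq
  have hdq : q.natDegree = p := by
    rw [hq, natDegree_sub_eq_left_of_natDegree_lt (by
      simp only [natDegree_X_pow, natDegree_X]; omega), natDegree_X_pow]
  have hq0 : q ≠ 0 := fun h => by simp [h] at hdq; omega
  let g : ZMod p →+* L := ZMod.castHom dvd_rfl L
  have hginj : Function.Injective g := g.injective
  have hroot : ∀ z : ZMod p, g z ∈ q.roots := by
    intro z
    rw [mem_roots hq0]
    simp only [hq, IsRoot, eval_sub, eval_pow, eval_X]
    rw [← map_pow, ZMod.pow_card, sub_self]
  have hsub : Finset.univ.image g ⊆ q.roots.toFinset := by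
    intro y hy
    simp only [Finset.mem_image] at hy
    obtain ⟨z, _, rfl⟩ := hy
    simpa using hroot z
  have hcard : q.roots.toFinset.card ≤ p := by
    calc q.roots.toFinset.card ≤ Multiset.card q.roots := q.roots.toFinset_card_le
    _ ≤ q.natDegree := q.card_roots'
    _ = p := hdq
  have himg : (Finset.univ.image g).card = p := by
    rw [Finset.card_image_of_injective _ hginj, Finset.card_univ, ZMod.card]
  have heq : Finset.univ.image g = q.roots.toFinset :=
    Finset.eq_of_subset_of_card_le hsub (by omega)
  have hx' : x ∈ q.roots.toFinset := by
    rw [Multiset.mem_toFinset, mem_roots hq0]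
    simp [hq, IsRoot, hx]
  rw [← heq, Finset.mem_image] at hx'
  obtain ⟨z, _, rfl⟩ := hx'
  refine ⟨z.val, ?_⟩
  rw [← map_natCast g z.val, ZMod.natCast_val, ZMod.cast_id]

lemma artin_schreier_irreducible {F : Type*} [Field F] {p : ℕ} [Fact p.Prime] [CharP F p]
    {a : F} (h : ∀ b : F, b ^ p - b ≠ a) :
    Irreducible (X ^ p - X - C a : F[X]) := by
  have hp : p.Prime := Fact.out
  have hp2 : 2 ≤ p := hp.two_le
  set f : F[X] := X ^ p - X - C a with hf
  have hdeglt : (X + C a : F[X]).natDegree < (X ^ p : F[X]).natDegree := by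
    simp only [natDegree_X_pow, natDegree_X_add_C]; omega
  have hf' : f = X ^ p - (X + C a) := by rw [hf]; ring
  have hdf : f.natDegree = p := by
    rw [hf', natDegree_sub_eq_left_of_natDegree_lt hdeglt, natDegree_X_pow]
  have hmono : f.Monic := by
    have : f.leadingCoeff = 1 := by
      rw [hf', leadingCoeff, natDegree_sub_eq_left_of_natDegree_lt hdeglt, natDegree_X_pow,
        coeff_sub, coeff_X_pow, if_pos rfl, coeff_add, coeff_X, coeff_C]
      have h1 : p ≠ 1 := by omega
      have h0 : p ≠ 0 := by omega
      simp only [h1, h0, if_false, ite_false]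
      norm_num
      omega
    exact this
  have hf0 : f ≠ 0 := hmono.ne_zero
  have key : ∀ u : F[X], u.Monic → u ∣ f → 0 < u.natDegree → u.natDegree < p → False := by
    intro u hu hdvd hd0 hdp
    set L := AlgebraicClosure F
    let φ := algebraMap F L
    have hφ : Function.Injective φ := φ.injective
    have hfLd : (f.map φ).natDegree = p := by rw [natDegree_map, hdf]
    obtain ⟨θ, hθ⟩ : ∃ θ : L, (f.map φ).IsRoot θ := by
      apply IsAlgClosed.exists_root
      have : 0 < (f.map φ).degree := natDegree_pos_iff_degree_pos.mp (by omega)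
      exact this.ne'
    have hθ' : θ ^ p - θ = φ a := by
      have := hθ
      simp only [hf, IsRoot, eval_map, eval₂_sub, eval₂_pow, eval₂_X, eval₂_C] at this
      linear_combination this
    have huLm : (u.map φ).Monic := hu.map φ
    have huL0 : u.map φ ≠ 0 := huLm.ne_zero
    have huLdvd : u.map φ ∣ f.map φ := Polynomial.map_dvd φ hdvd
    have hroots : ∀ r ∈ (u.map φ).roots, ∃ n : ℕ, r = θ + (n : L) := by
      intro r hr
      have hru : (u.map φ).IsRoot r := (mem_roots huL0).mp hr
      have hrf : (f.map φ).IsRoot r := by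
        obtain ⟨w, hw⟩ := huLdvd
        rw [hw, IsRoot, eval_mul, hru.eq_zero, zero_mul]
      have hra : r ^ p - r = φ a := by
        simp only [hf, IsRoot, eval_map, eval₂_sub, eval₂_pow, eval₂_X, eval₂_C] at hrf
        linear_combination hrf
      have hfix : (r - θ) ^ p = r - θ := by
        rw [sub_pow_char]
        linear_combination hra - hθ'
      obtain ⟨n, hn⟩ := fixed_of_frobenius hfix
      exact ⟨n, by linear_combination hn⟩
    have hsplit : (u.map φ).Splits := IsAlgClosed.splits _
    have hsum : (u.map φ).roots.sum = -φ u.nextCoeff := by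
      have h1 := hsplit.nextCoeff_eq_neg_sum_roots_of_monic huLm
      rw [nextCoeff_map hφ] at h1
      linear_combination h1
    have hcard : Multiset.card (u.map φ).roots = u.natDegree := by
      have h2 := splits_iff_card_roots.mp hsplit
      rwa [natDegree_map] at h2
    have hsT : (((u.map φ).roots.map (fun r => r - θ)).sum) ∈ φ.fieldRange := by
      apply Subfield.multiset_sum_mem
      intro x hx
      obtain ⟨r, hr, rfl⟩ := Multiset.mem_map.mp hx
      obtain ⟨n, rfl⟩ := hroots r hr
      exact ⟨(n : F), by simp⟩
    have hmsum : ((u.map φ).roots.map (fun r => r - θ)).sum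
        = (u.map φ).roots.sum - u.natDegree • θ := by
      rw [Multiset.sum_map_sub]
      congr 1
      · simp
      · rw [Multiset.map_const', Multiset.sum_replicate, hcard]
    have hdθ : (u.natDegree : L) * θ ∈ φ.fieldRange := by
      have h1 : (u.map φ).roots.sum ∈ φ.fieldRange := by
        rw [hsum]; exact ⟨-u.nextCoeff, by simp⟩
      have h2 : u.natDegree • θ
          = (u.map φ).roots.sum - ((u.map φ).roots.map (fun r => r - θ)).sum := by
        rw [hmsum]; ring
      rw [← nsmul_eq_mul, h2]
      exact Subfield.sub_mem _ h1 hsT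
    have hdne : (u.natDegree : L) ≠ 0 := by
      rw [Ne, CharP.cast_eq_zero_iff L p]
      exact Nat.not_dvd_of_pos_of_lt hd0 hdp
    have hθT : θ ∈ φ.fieldRange := by
      have heq : θ = (u.natDegree : L)⁻¹ * ((u.natDegree : L) * θ) := by
        rw [← mul_assoc, inv_mul_cancel₀ hdne, one_mul]
      rw [heq]
      exact Subfield.mul_mem _ (Subfield.inv_mem _ ⟨(u.natDegree : F), by simp⟩) hdθ
    obtain ⟨b, hb⟩ := hθT
    apply h b
    apply hφ
    rw [map_sub, map_pow, hb, hθ']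
  constructor
  · intro hunit
    have := natDegree_eq_zero_of_isUnit hunit
    omega
  · intro u v huv
    by_contra hcon
    push_neg at hcon
    obtain ⟨hu, hv⟩ := hcon
    have hu0 : u ≠ 0 := by rintro rfl; rw [zero_mul] at huv; exact hf0 huv
    have hv0 : v ≠ 0 := by rintro rfl; rw [mul_zero] at huv; exact hf0 huv
    have hadd : u.natDegree + v.natDegree = p := by
      rw [← natDegree_mul hu0 hv0, ← huv, hdf]
    have hun : 0 < u.natDegree := by
      rcases Nat.eq_zero_or_pos u.natDegree with h0 | hgt
      · exfalso; apply hu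
        rw [eq_C_of_natDegree_eq_zero h0] at hu0 ⊢
        exact isUnit_C.mpr (isUnit_iff_ne_zero.mpr fun hc => hu0 (by rw [hc, map_zero]))
      · exact hgt
    have hvn : 0 < v.natDegree := by
      rcases Nat.eq_zero_or_pos v.natDegree with h0 | hgt
      · exfalso; apply hv
        rw [eq_C_of_natDegree_eq_zero h0] at hv0 ⊢
        exact isUnit_C.mpr (isUnit_iff_ne_zero.mpr fun hc => hv0 (by rw [hc, map_zero]))
      · exact hgt
    have hlc : u.leadingCoeff ≠ 0 := leadingCoeff_ne_zero.mpr hu0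
    have hu'm : (u * C u.leadingCoeff⁻¹).Monic := monic_mul_leadingCoeff_inv hu0
    have hu'dvd : u * C u.leadingCoeff⁻¹ ∣ f := by
      refine ⟨C u.leadingCoeff * v, ?_⟩
      rw [huv]
      rw [mul_assoc, ← mul_assoc (C u.leadingCoeff⁻¹), ← C_mul, inv_mul_cancel₀ hlc, C_1, one_mul]
    have hu'd : (u * C u.leadingCoeff⁻¹).natDegree = u.natDegree :=
      natDegree_mul_C (inv_ne_zero hlc)
    exact key _ hu'm hu'dvd (by omega) (by omega)

lemma g_facts {K : Type*} [Field K] {p : ℕ} (hp : p.Prime) [CharP K p] :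
    (X ^ p - X : K[X]).natDegree = p ∧ Squarefree (X ^ p - X : K[X]) := by
  have hp2 : 2 ≤ p := hp.two_le
  have hdeg : (X ^ p - X : K[X]).natDegree = p := by
    rw [natDegree_sub_eq_left_of_natDegree_lt (by
      simp only [natDegree_X_pow, natDegree_X]; omega), natDegree_X_pow]
  refine ⟨hdeg, ?_⟩
  have hder : derivative (X ^ p - X : K[X]) = -1 := by
    rw [derivative_sub, derivative_X_pow, derivative_X]
    have : ((p : K[X])) = 0 := by
      rw [← map_natCast (C : K →+* K[X]) p, CharP.cast_eq_zero, map_zero]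
    rw [← map_natCast (C : K →+* K[X]) p] at *
    simp [CharP.cast_eq_zero K p]
  have hsep : (X ^ p - X : K[X]).Separable := by
    rw [Separable, hder]
    exact (isCoprime_one_right).neg_right
  exact hsep.squarefree

lemma no_AS_solution {K : Type*} [Field K] {p : ℕ} (hp : p.Prime) [CharP K p]
    {c : K} (hc : c ≠ 0) (b : RatFunc K) :
    b ^ p - b ≠ algebraMap K[X] (RatFunc K) (C c) / algebraMap K[X] (RatFunc K) (X ^ p - X) := by
  intro heq
  obtain ⟨hdeg, hsqf⟩ := g_facts (K := K) hp
  have hp2 : 2 ≤ p := hp.two_le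
  set g : K[X] := X ^ p - X with hg
  have hg0 : g ≠ 0 := fun h => by rw [h] at hdeg; simp at hdeg; omega
  have hgu : ¬ IsUnit g := fun h => by
    have := natDegree_eq_zero_of_isUnit h; omega
  clear_value g
  set φ := algebraMap K[X] (RatFunc K) with hφ
  have hφinj : Function.Injective φ := IsFractionRing.injective _ _
  have hv0 : b.denom ≠ 0 := b.denom_ne_zero
  have hφv : φ b.denom ≠ 0 := RatFunc.algebraMap_ne_zero hv0
  have hφg : φ g ≠ 0 := RatFunc.algebraMap_ne_zero hg0
  have hb : φ b.num / φ b.denom = b := b.num_div_denom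
  have cop : IsCoprime b.num b.denom := b.isCoprime_num_denom
  -- main polynomial identity
  have hid : (b.num ^ p - b.num * b.denom ^ (p - 1)) * g = C c * b.denom ^ p := by
    have h7 : b.denom * ((b.num ^ p - b.num * b.denom ^ (p - 1)) * g)
        = b.denom * (C c * b.denom ^ p) := by
      apply hφinj
      push_cast [map_mul, map_sub, map_pow]
      rw [← hb] at heq
      field_simp at heq
      have hp1 : φ b.denom ^ (p - 1) * φ b.denom = φ b.denom ^ p := by
        rw [← pow_succ]; congr 1; omega
      have ht : φ b.num ^ p = (φ b.num / φ b.denom) ^ p * φ b.denom ^ p := by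
        rw [← mul_pow, div_mul_cancel₀ _ hφv]
      linear_combination φ b.denom ^ p * heq + φ b.denom * φ g * ht - φ b.num * φ g * hp1
    exact mul_left_cancel₀ hv0 h7
  have hgvp : g ∣ b.denom ^ p := by
    have h1 : g ∣ C c * b.denom ^ p :=
      ⟨b.num ^ p - b.num * b.denom ^ (p - 1), by rw [← hid]; ring⟩
    exact (isUnit_C.mpr hc.isUnit).dvd_mul_left.mp h1
  have hgv : g ∣ b.denom := (hsqf.dvd_pow_iff_dvd (by omega : p ≠ 0)).mp hgvp
  have hgp1u : g ^ (p - 1) ∣ b.num ^ p := by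
    have h2 : g ^ p ∣ b.denom ^ p := pow_dvd_pow_of_dvd hgv p
    have h3 : g ^ p ∣ (b.num ^ p - b.num * b.denom ^ (p - 1)) * g := by
      rw [hid]; exact h2.mul_left _
    have h4 : g ^ p ∣ b.num * b.denom ^ (p - 1) * g := by
      have : g ^ (p - 1) ∣ b.denom ^ (p - 1) := pow_dvd_pow_of_dvd hgv _
      calc g ^ p = g ^ (p - 1) * g := by rw [← pow_succ]; congr 1; omega
      _ ∣ b.denom ^ (p - 1) * g := mul_dvd_mul_right this g
      _ ∣ b.num * b.denom ^ (p - 1) * g := ⟨b.num, by ring⟩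
    have h5 : g ^ p ∣ b.num ^ p * g := by
      have hsum : (b.num ^ p - b.num * b.denom ^ (p - 1)) * g + b.num * b.denom ^ (p - 1) * g
          = b.num ^ p * g := by ring
      rw [← hsum]; exact dvd_add h3 h4
    have h6 : g ^ (p - 1) * g ∣ b.num ^ p * g := by
      rw [← pow_succ]
      convert h5 using 2
      omega
    exact (mul_dvd_mul_iff_right hg0).mp h6
  have hgu' : g ∣ b.num := by
    have : g ∣ b.num ^ p := dvd_trans (dvd_pow_self g (by omega : p - 1 ≠ 0)) hgp1u
    exact (hsqf.dvd_pow_iff_dvd (by omega : p ≠ 0)).mp this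
  exact hgu (cop.isUnit_of_dvd' hgu' hgv)

end AuxAS

open MvPolynomial

/-- For an odd prime `p`, an algebraically closed field `K` of characteristic `p`, and
`c ∈ K` nonzero, the polynomial `(X^p - X)(Y^p - Y) - c` is irreducible in `K[X,Y]`. -/
theorem artin_mumford_poly_irreducible (p : ℕ) (hp : p.Prime) (hodd : Odd p)
    (K : Type*) [Field K] [IsAlgClosed K] [CharP K p] (c : K) (hc : c ≠ 0) :
    Irreducible ((X 0 ^ p - X 0) * (X 1 ^ p - X 1) - C c : MvPolynomial (Fin 2) K) := by
  classical
  haveI : Fact p.Prime := ⟨hp⟩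
  have hp2 : 2 ≤ p := hp.two_le
  -- the ring equivalence  K[x₀,x₁] ≃ (K[x])[y]
  let e2 : MvPolynomial (Fin 1) K ≃+* Polynomial K :=
    (finSuccEquiv K 0).toRingEquiv.trans
      (Polynomial.mapEquiv (isEmptyAlgEquiv K (Fin 0)).toRingEquiv)
  let e : MvPolynomial (Fin 2) K ≃+* Polynomial (Polynomial K) :=
    (finSuccEquiv K 1).toRingEquiv.trans (Polynomial.mapEquiv e2)
  set g : Polynomial K := Polynomial.X ^ p - Polynomial.X with hgdef
  set fY : Polynomial (Polynomial K) :=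
    (Polynomial.X ^ p - Polynomial.X) * Polynomial.C g
      - Polynomial.C (Polynomial.C c) with hfY
  have he : e ((X 0 ^ p - X 0) * (X 1 ^ p - X 1) - C c) = fY := by
    have h0 : e (X 0) = Polynomial.X := by
      simp [e, e2, finSuccEquiv_X_zero]
    have h1 : e (X 1) = Polynomial.C Polynomial.X := by
      have : (X 1 : MvPolynomial (Fin 2) K) = X (Fin.succ 0) := rfl
      simp [e, e2, this, finSuccEquiv_X_succ, finSuccEquiv_X_zero]
    have hC : e (C c) = Polynomial.C (Polynomial.C c) := by
      simp [e, e2, finSuccEquiv_apply]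
      exact MvPolynomial.coeff_zero_C c
    rw [map_sub, map_mul, map_sub, map_sub, map_pow, map_pow, h0, h1, hC, hfY, hgdef]
    push_cast [map_sub, map_pow]
    ring
  rw [← MulEquiv.irreducible_iff e, he]
  -- primitivity
  have hprim : fY.IsPrimitive := by
    intro r hr
    have hco := (Polynomial.C_dvd_iff_dvd_coeff r fY).mp hr 0
    have hc0 : fY.coeff 0 = -Polynomial.C c := by
      rw [hfY, Polynomial.coeff_sub, Polynomial.mul_coeff_zero, Polynomial.coeff_sub,
        Polynomial.coeff_X_pow, if_neg (by omega : ¬ (0 = p)), Polynomial.coeff_X_zero,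
        Polynomial.coeff_C_zero]
      simp
    rw [hc0] at hco
    exact isUnit_of_dvd_unit (dvd_neg.mp hco) (Polynomial.isUnit_C.mpr hc.isUnit)
  rw [hprim.irreducible_iff_irreducible_map_fraction_map (K := RatFunc K)]
  -- map to RatFunc K
  set φ := algebraMap (Polynomial K) (RatFunc K) with hφ
  haveI : CharP (RatFunc K) p :=
    charP_of_injective_ringHom (IsFractionRing.injective (Polynomial K) (RatFunc K)) p
  have hg0 : g ≠ 0 := by
    intro h
    have : (Polynomial.X ^ p - Polynomial.X : Polynomial K).natDegree = p := by
      rw [Polynomial.natDegree_sub_eq_left_of_natDegree_lt (by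
        simp only [Polynomial.natDegree_X_pow, Polynomial.natDegree_X]; omega),
        Polynomial.natDegree_X_pow]
    rw [← hgdef, h] at this
    simp at this
    omega
  have hφg : φ g ≠ 0 := RatFunc.algebraMap_ne_zero hg0
  have hmap : fY.map φ
      = Polynomial.C (φ g) * (Polynomial.X ^ p - Polynomial.X - Polynomial.C (φ (Polynomial.C c) / φ g)) := by
    rw [hfY]
    push_cast [Polynomial.map_sub, Polynomial.map_mul, Polynomial.map_pow, Polynomial.map_C,
      Polynomial.map_X]
    rw [mul_sub, mul_sub, ← Polynomial.C_mul, mul_div_cancel₀ _ hφg]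
    ring
  rw [hmap, irreducible_isUnit_mul (by
    exact Polynomial.isUnit_C.mpr (isUnit_iff_ne_zero.mpr hφg))]
  exact artin_schreier_irreducible (fun b hb => no_AS_solution hp hc b (by rw [hb, hgdef]))
end

section
/- Let p be an odd prime, K an algebraically closed field of characteristic p, and c a nonzero element of K. Let F be the field of fractions of the integral domain K[X,Y]/((X^p − X)(Y^p − Y) − c), and let x, y denote the images of X, Y in F. Then the element u = x·y^p − x^p·y is not of the form w^p − w for any w ∈ F; that is, for every w ∈ F one has w^p − w ≠ x·y^p − x^p·y. -/
open MvPolynomial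

/-- The polynomial `(X^p - X)(Y^p - Y) - c` defining the Artin–Mumford curve. -/
noncomputable def amPoly (p : ℕ) (K : Type*) [Field K] (c : K) : MvPolynomial (Fin 2) K :=
  (X 0 ^ p - X 0) * (X 1 ^ p - X 1) - C c

/-- The coordinate ring `K[X,Y]/((X^p - X)(Y^p - Y) - c)` of the Artin–Mumford curve. -/
abbrev amRing (p : ℕ) (K : Type*) [Field K] (c : K) : Type _ :=
  MvPolynomial (Fin 2) K ⧸ Ideal.span {amPoly p K c}

section Aux

variable {p : ℕ} {K : Type*} [Field K]

/-- The substitution `Xᵢ ↦ Xᵢ + aᵢ` on the polynomial ring. -/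
noncomputable def amSh (a : Fin 2 → K) :
    MvPolynomial (Fin 2) K →+* MvPolynomial (Fin 2) K :=
  ((aeval fun i => X i + C (a i) : MvPolynomial (Fin 2) K →ₐ[K] MvPolynomial (Fin 2) K) :
    MvPolynomial (Fin 2) K →+* MvPolynomial (Fin 2) K)

@[simp] lemma amSh_C (a : Fin 2 → K) (k : K) : amSh a (C k) = C k := by
  simp [amSh, algebraMap_eq]

@[simp] lemma amSh_X (a : Fin 2 → K) (i : Fin 2) : amSh a (X i) = X i + C (a i) := by
  simp [amSh]

lemma amSh_comp (a b : Fin 2 → K) : (amSh a).comp (amSh b) = amSh (a + b) :=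
  MvPolynomial.ringHom_ext (fun r => by simp) (fun i => by simp; ring)

lemma amSh_id : amSh (0 : Fin 2 → K) = RingHom.id _ :=
  MvPolynomial.ringHom_ext (fun r => by simp) (fun i => by simp)

variable [hp : Fact p.Prime] [CharP K p] {c : K}

lemma amSh_amPoly {a : Fin 2 → K} (ha : ∀ i, a i ^ p = a i) :
    amSh a (amPoly p K c) = amPoly p K c := by
  have h : ∀ i : Fin 2,
      (X i + C (a i) : MvPolynomial (Fin 2) K) ^ p - (X i + C (a i)) = X i ^ p - X i := by
    intro i
    rw [add_pow_char, ← C_pow, ha i]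
    ring
  simp only [amPoly, map_sub, map_mul, map_pow, amSh_X, amSh_C]
  rw [h 0, h 1]

variable (p c)

lemma amSh_le_comap {a : Fin 2 → K} (ha : ∀ i, a i ^ p = a i) :
    Ideal.span {amPoly p K c} ≤ (Ideal.span {amPoly p K c}).comap (amSh a) := by
  rw [Ideal.span_le]
  intro q hq
  rcases Set.mem_singleton_iff.mp hq with rfl
  show amSh a (amPoly p K c) ∈ Ideal.span {amPoly p K c}
  rw [amSh_amPoly ha]
  exact Ideal.subset_span rfl

/-- The induced shift on the coordinate ring. -/
noncomputable def amQSh (a : Fin 2 → K) (ha : ∀ i, a i ^ p = a i) :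
    amRing p K c →+* amRing p K c :=
  Ideal.quotientMap _ (amSh a) (amSh_le_comap p c ha)

lemma amQSh_mk (a : Fin 2 → K) (ha : ∀ i, a i ^ p = a i) (q : MvPolynomial (Fin 2) K) :
    amQSh p c a ha (Ideal.Quotient.mk _ q) = Ideal.Quotient.mk _ (amSh a q) :=
  Ideal.quotientMap_mk

lemma amQSh_comp (a b g : Fin 2 → K) (ha : ∀ i, a i ^ p = a i) (hb : ∀ i, b i ^ p = b i)
    (hg : ∀ i, g i ^ p = g i) (hab : a + b = g) :
    (amQSh p c a ha).comp (amQSh p c b hb) = amQSh p c g hg := by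
  subst hab
  refine Ideal.Quotient.ringHom_ext (RingHom.ext fun q => ?_)
  simp only [RingHom.coe_comp, Function.comp_apply, amQSh_mk]
  rw [← RingHom.congr_fun (amSh_comp a b) q]
  rfl

lemma amQSh_id (h0 : ∀ i, (0 : Fin 2 → K) i ^ p = (0 : Fin 2 → K) i) :
    amQSh p c 0 h0 = RingHom.id _ := by
  refine Ideal.Quotient.ringHom_ext (RingHom.ext fun q => ?_)
  simp [amQSh_mk, amSh_id]

lemma amQSh_injective (a : Fin 2 → K) (ha : ∀ i, a i ^ p = a i) (hodd : Odd p) :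
    Function.Injective (amQSh p c a ha) := by
  have hna : ∀ i, (-a) i ^ p = (-a) i := fun i => by
    simp only [Pi.neg_apply, hodd.neg_pow, ha i]
  have h0 : ∀ i, (0 : Fin 2 → K) i ^ p = (0 : Fin 2 → K) i := fun i => by
    simp [hp.out.ne_zero]
  have hcomp : (amQSh p c (-a) hna).comp (amQSh p c a ha) = RingHom.id _ := by
    rw [amQSh_comp p c (-a) a 0 hna ha h0 (neg_add_cancel a), amQSh_id]
  exact Function.LeftInverse.injective (fun q => RingHom.congr_fun hcomp q)

variable [IsDomain (amRing p K c)]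

/-- The induced shift on the function field. -/
noncomputable def amFSh (a : Fin 2 → K) (ha : ∀ i, a i ^ p = a i) (hodd : Odd p) :
    FractionRing (amRing p K c) →+* FractionRing (amRing p K c) :=
  IsFractionRing.lift
    (g := (algebraMap (amRing p K c) (FractionRing (amRing p K c))).comp (amQSh p c a ha))
    (fun u v huv => amQSh_injective p c a ha hodd
      (IsFractionRing.injective (amRing p K c) (FractionRing (amRing p K c)) huv))

lemma amFSh_algebraMap (a : Fin 2 → K) (ha : ∀ i, a i ^ p = a i) (hodd : Odd p)
    (r : amRing p K c) :
    amFSh p c a ha hodd (algebraMap _ _ r) = algebraMap _ _ (amQSh p c a ha r) :=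
  IsFractionRing.lift_algebraMap _ _

lemma amFSh_comp_apply (a b g : Fin 2 → K) (ha : ∀ i, a i ^ p = a i)
    (hb : ∀ i, b i ^ p = b i) (hg : ∀ i, g i ^ p = g i) (hab : a + b = g) (hodd : Odd p)
    (z : FractionRing (amRing p K c)) :
    amFSh p c a ha hodd (amFSh p c b hb hodd z) = amFSh p c g hg hodd z := by
  have hcomp : (amFSh p c a ha hodd).comp (amFSh p c b hb hodd) = amFSh p c g hg hodd := by
    refine IsLocalization.ringHom_ext (nonZeroDivisors (amRing p K c)) (RingHom.ext fun r => ?_)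
    simp only [RingHom.coe_comp, Function.comp_apply, amFSh_algebraMap]
    rw [← RingHom.congr_fun (amQSh_comp p c a b g ha hb hg hab) r]
    rfl
  exact RingHom.congr_fun hcomp z

end Aux

/-- In a field of characteristic `p`, any root of `Xᵖ - X` lies in the prime field. -/
lemma exists_zmod_of_pow_eq {F : Type*} [Field F] {p : ℕ} [hp : Fact p.Prime] [CharP F p]
    {v : F} (h : v ^ p = v) : ∃ a : ZMod p, v = ZMod.castHom dvd_rfl F a := by
  classical
  set φ : ZMod p →+* F := ZMod.castHom dvd_rfl F with hφ
  have hφinj : Function.Injective φ := ZMod.castHom_injective F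
  set q : Polynomial F := Polynomial.X ^ p - Polynomial.X with hq
  have hm : q.Monic := Polynomial.monic_X_pow_sub (by
    rw [Polynomial.degree_X]
    exact_mod_cast hp.out.one_lt)
  have hq0 : q ≠ 0 := hm.ne_zero
  have hqd : q.natDegree = p := by
    rw [hq, Polynomial.natDegree_sub_eq_left_of_natDegree_lt, Polynomial.natDegree_X_pow]
    rw [Polynomial.natDegree_X, Polynomial.natDegree_X_pow]
    exact hp.out.one_lt
  have heval : ∀ t : F, q.eval t = t ^ p - t := fun t => by
    simp [hq]
  set T : Finset F := Finset.univ.image φ with hT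
  have hsub : T ⊆ q.roots.toFinset := by
    intro t ht
    rw [hT, Finset.mem_image] at ht
    obtain ⟨a, -, rfl⟩ := ht
    rw [Multiset.mem_toFinset, Polynomial.mem_roots hq0]
    show q.eval (φ a) = 0
    rw [heval, ← map_pow, ZMod.pow_card, sub_self]
  have hTcard : T.card = p := by
    rw [hT, Finset.card_image_of_injective _ hφinj, Finset.card_univ, ZMod.card]
  have hle : q.roots.toFinset.card ≤ T.card := by
    rw [hTcard]
    exact (Multiset.toFinset_card_le _).trans ((Polynomial.card_roots' q).trans hqd.le)
  have hTeq : T = q.roots.toFinset := Finset.eq_of_subset_of_card_le hsub hle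
  have hv : v ∈ q.roots.toFinset := by
    rw [Multiset.mem_toFinset, Polynomial.mem_roots hq0]
    show q.eval v = 0
    rw [heval, h, sub_self]
  rw [← hTeq, hT, Finset.mem_image] at hv
  obtain ⟨a, -, ha⟩ := hv
  exact ⟨a, ha.symm⟩


/-- Abstract key lemma: in a field `F` of odd characteristic `p`, if `σ`, `τ` are commuting (at
`w`) endomorphisms with `σ x = x`, `σ y = y + 1`, `τ x = x + 1`, `τ y = y`, then
`w ^ p - w = x yᵖ - xᵖ y` is impossible. -/
lemma am_key {F : Type*} [Field F] {p : ℕ} [hp : Fact p.Prime] [CharP F p] (hodd : Odd p)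
    (x y w : F) (σ τ : F →+* F)
    (hσx : σ x = x) (hσy : σ y = y + 1) (hτx : τ x = x + 1) (hτy : τ y = y)
    (hcomm : σ (τ w) = τ (σ w))
    (hw : w ^ p - w = x * y ^ p - x ^ p * y) : False := by
  have hσw : σ w ^ p - σ w = (x * y ^ p - x ^ p * y) + x - x ^ p := by
    have h1 := congrArg σ hw
    rw [map_sub, map_pow] at h1
    rw [h1, map_sub, map_mul, map_mul, map_pow, map_pow, hσx, hσy, add_pow_char]
    ring
  have hτw : τ w ^ p - τ w = (x * y ^ p - x ^ p * y) + y ^ p - y := by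
    have h1 := congrArg τ hw
    rw [map_sub, map_pow] at h1
    rw [h1, map_sub, map_mul, map_mul, map_pow, map_pow, hτx, hτy, add_pow_char]
    ring
  have hA : (σ w - w + x) ^ p = σ w - w + x := by
    have hexp : (σ w - w + x) ^ p = σ w ^ p - w ^ p + x ^ p := by
      rw [add_pow_char, sub_eq_add_neg, add_pow_char, hodd.neg_pow]
      ring
    rw [hexp]
    linear_combination hσw - hw
  have hB : (τ w - w - y) ^ p = τ w - w - y := by
    have hexp : (τ w - w - y) ^ p = τ w ^ p - w ^ p - y ^ p := by
      rw [sub_eq_add_neg, sub_eq_add_neg, add_pow_char, add_pow_char, hodd.neg_pow,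
        hodd.neg_pow]
      ring
    rw [hexp]
    linear_combination hτw - hw
  obtain ⟨α, hα⟩ := exists_zmod_of_pow_eq hA
  obtain ⟨β, hβ⟩ := exists_zmod_of_pow_eq hB
  set φ : ZMod p →+* F := ZMod.castHom dvd_rfl F with hφdef
  have hτφ : ∀ z : ZMod p, τ (φ z) = φ z := fun z =>
    RingHom.congr_fun (RingHom.ext_zmod (τ.comp φ) φ) z
  have hσφ : ∀ z : ZMod p, σ (φ z) = φ z := fun z =>
    RingHom.congr_fun (RingHom.ext_zmod (σ.comp φ) φ) z
  have hσw' : σ w = w - x + φ α := by linear_combination hα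
  have hτw' : τ w = w + y + φ β := by linear_combination hβ
  have e1 : σ (τ w) = (w - x + φ α) + (y + 1) + φ β := by
    rw [hτw', map_add, map_add, hσy, hσφ β, hσw']
  have e2 : τ (σ w) = (w + y + φ β) - (x + 1) + φ α := by
    rw [hσw', map_add, map_sub, hτx, hτφ α, hτw']
  have h2 : (2 : F) = 0 := by
    have h := hcomm
    rw [e1, e2] at h
    linear_combination h
  have h2' : ((2 : ℕ) : F) ≠ 0 := by
    rw [Ne, CharP.cast_eq_zero_iff F p]
    intro hdvd
    have hp2 : p = 2 := (Nat.prime_dvd_prime_iff_eq hp.out Nat.prime_two).mp hdvd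
    rw [hp2] at hodd
    norm_num [Nat.odd_iff] at hodd
  exact h2' (by exact_mod_cast h2)

set_option maxHeartbeats 1000000 in
set_option synthInstance.maxHeartbeats 400000 in
/-- In the function field `F` of the Artin–Mumford curve, the element `u = x·yᵖ - xᵖ·y` is not
of the form `wᵖ - w` for any `w ∈ F`. -/
theorem am_u_not_artin_schreier_trivial (p : ℕ) (hp : p.Prime) (hodd : Odd p)
    (K : Type*) [Field K] [IsAlgClosed K] [CharP K p] (c : K) (hc : c ≠ 0)
    [IsDomain (amRing p K c)]
    (x y : FractionRing (amRing p K c))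
    (hx : x = algebraMap (amRing p K c) (FractionRing (amRing p K c))
        (Ideal.Quotient.mk (Ideal.span {amPoly p K c}) (X 0)))
    (hy : y = algebraMap (amRing p K c) (FractionRing (amRing p K c))
        (Ideal.Quotient.mk (Ideal.span {amPoly p K c}) (X 1))) :
    ∀ w : FractionRing (amRing p K c), w ^ p - w ≠ x * y ^ p - x ^ p * y := by
  haveI : Fact p.Prime := ⟨hp⟩
  intro w hw
  -- `F` has characteristic `p`
  let φK : K →+* FractionRing (amRing p K c) :=
    (algebraMap (amRing p K c) (FractionRing (amRing p K c))).comp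
      ((Ideal.Quotient.mk (Ideal.span {amPoly p K c})).comp (C : K →+* MvPolynomial (Fin 2) K))
  haveI : CharP (FractionRing (amRing p K c)) p := charP_of_injective_ringHom φK.injective p
  -- the two shift automorphisms
  set a₁ : Fin 2 → K := ![0, 1] with ha₁def
  set a₂ : Fin 2 → K := ![1, 0] with ha₂def
  have ha₁ : ∀ i, a₁ i ^ p = a₁ i := by
    intro i; fin_cases i <;> simp [ha₁def, hp.ne_zero]
  have ha₂ : ∀ i, a₂ i ^ p = a₂ i := by
    intro i; fin_cases i <;> simp [ha₂def, hp.ne_zero]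
  have h12 : ∀ i, (a₁ + a₂) i ^ p = (a₁ + a₂) i := by
    intro i; fin_cases i <;> simp [ha₁def, ha₂def]
  set σ : FractionRing (amRing p K c) →+* FractionRing (amRing p K c) := amFSh p c a₁ ha₁ hodd with hσdef
  set τ : FractionRing (amRing p K c) →+* FractionRing (amRing p K c) := amFSh p c a₂ ha₂ hodd with hτdef
  -- action on the generators
  have hσx : σ x = x := by
    rw [hx, hσdef, amFSh_algebraMap, amQSh_mk, amSh_X]
    simp [ha₁def]
  have hσy : σ y = y + 1 := by
    rw [hy, hσdef, amFSh_algebraMap, amQSh_mk, amSh_X]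
    simp [ha₁def]
  have hτx : τ x = x + 1 := by
    rw [hx, hτdef, amFSh_algebraMap, amQSh_mk, amSh_X]
    simp [ha₂def]
  have hτy : τ y = y := by
    rw [hy, hτdef, amFSh_algebraMap, amQSh_mk, amSh_X]
    simp [ha₂def]
  have hcommut : σ (τ w) = τ (σ w) := by
    rw [hσdef, hτdef, amFSh_comp_apply p c a₁ a₂ (a₁ + a₂) ha₁ ha₂ h12 rfl hodd w,
      amFSh_comp_apply p c a₂ a₁ (a₁ + a₂) ha₂ ha₁ h12 (add_comm a₂ a₁) hodd w]
  exact am_key hodd x y w σ τ hσx hσy hτx hτy hcommut hw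
end

section
/- Let p be an odd prime, K an algebraically closed field of characteristic p, c ∈ K nonzero, F the fraction field of K[X,Y]/((X^p − X)(Y^p − Y) − c) with x, y the images of X, Y, u = x·y^p − x^p·y, and F′ = F[Z]/(Z^p − Z − u) the degree-p field extension of F obtained by adjoining a root z of the irreducible polynomial Z^p − Z − u. Then there exist K-automorphisms g and h of the field F′ determined by g(x) = x+1, g(y) = y, g(z) = z + y and h(x) = x, h(y) = y − 1, h(z) = z + x, and the subgroup of the K-automorphism group of F′ generated by g and h is a non-abelian group of order p³ in which every element σ satisfies σ^p = id (a non-abelian group of order p³ and exponent p). -/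
open MvPolynomial

set_option synthInstance.maxHeartbeats 1000000
set_option maxHeartbeats 1000000

/-! ### The Heisenberg group of order `p³` -/

@[ext] structure Heis (p : ℕ) where
  a : ZMod p
  b : ZMod p
  e : ZMod p

namespace Heis
variable {p : ℕ}

instance : Mul (Heis p) :=
  ⟨fun v w => ⟨v.a + w.a, v.b + w.b, v.e + w.e + v.a * w.b - w.a * v.b⟩⟩
instance : One (Heis p) := ⟨⟨0, 0, 0⟩⟩
instance : Inv (Heis p) := ⟨fun v => ⟨-v.a, -v.b, -v.e⟩⟩

@[simp] lemma mul_a (v w : Heis p) : (v * w).a = v.a + w.a := rfl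
@[simp] lemma mul_b (v w : Heis p) : (v * w).b = v.b + w.b := rfl
@[simp] lemma mul_e (v w : Heis p) :
    (v * w).e = v.e + w.e + v.a * w.b - w.a * v.b := rfl
@[simp] lemma one_a : (1 : Heis p).a = 0 := rfl
@[simp] lemma one_b : (1 : Heis p).b = 0 := rfl
@[simp] lemma one_e : (1 : Heis p).e = 0 := rfl
@[simp] lemma inv_a (v : Heis p) : v⁻¹.a = -v.a := rfl
@[simp] lemma inv_b (v : Heis p) : v⁻¹.b = -v.b := rfl
@[simp] lemma inv_e (v : Heis p) : v⁻¹.e = -v.e := rfl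

instance : Group (Heis p) where
  mul_assoc v w t := by ext <;> simp <;> ring
  one_mul v := by ext <;> simp
  mul_one v := by ext <;> simp
  inv_mul_cancel v := by ext <;> simp

lemma pow_def (v : Heis p) (n : ℕ) : v ^ n = ⟨n * v.a, n * v.b, n * v.e⟩ := by
  induction n with
  | zero => ext <;> simp
  | succ n ih =>
    rw [pow_succ, ih]
    ext <;> push_cast <;> simp <;> ring

lemma card_eq (hp : 0 < p) : Nat.card (Heis p) = p ^ 3 := by
  have e : Heis p ≃ (ZMod p × ZMod p × ZMod p) :=
    ⟨fun v => (v.a, v.b, v.e), fun t => ⟨t.1, t.2.1, t.2.2⟩, fun v => rfl, fun t => rfl⟩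
  rw [Nat.card_congr e, Nat.card_prod, Nat.card_prod, Nat.card_zmod]
  ring

lemma mem_closure [Fact p.Prime] (hodd : Odd p) (v : Heis p) :
    v ∈ Subgroup.closure ({⟨1, 0, 0⟩, ⟨0, 1, 0⟩} : Set (Heis p)) := by
  set G1 : Heis p := ⟨1, 0, 0⟩ with hG1
  set G2 : Heis p := ⟨0, 1, 0⟩ with hG2
  have hm1 : G1 ∈ Subgroup.closure ({G1, G2} : Set (Heis p)) :=
    Subgroup.subset_closure (Set.mem_insert _ _)
  have hm2 : G2 ∈ Subgroup.closure ({G1, G2} : Set (Heis p)) :=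
    Subgroup.subset_closure (Set.mem_insert_of_mem _ rfl)
  have h2 : (2 : ZMod p) ≠ 0 := by
    intro h
    have hdvd : p ∣ 2 := by
      rwa [show (2 : ZMod p) = ((2 : ℕ) : ZMod p) by norm_cast,
        ZMod.natCast_eq_zero_iff] at h
    have hp2 : p = 2 := (Nat.prime_dvd_prime_iff_eq (Fact.out : p.Prime) Nat.prime_two).mp hdvd
    rw [hp2] at hodd
    rcases hodd with ⟨k, hk⟩; omega
  set T : Heis p := G2⁻¹ * G1⁻¹ * G2 * G1 with hT
  have hmT : T ∈ Subgroup.closure ({G1, G2} : Set (Heis p)) :=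
    Subgroup.mul_mem _ (Subgroup.mul_mem _ (Subgroup.mul_mem _
      (Subgroup.inv_mem _ hm2) (Subgroup.inv_mem _ hm1)) hm2) hm1
  have hTval : T = ⟨0, 0, -2⟩ := by
    rw [hT]; ext <;> simp [hG1, hG2] <;> ring
  set m : ZMod p := (v.a * v.b - v.e) * (2 : ZMod p)⁻¹ with hm
  have key : v = G1 ^ (v.a.val) * G2 ^ (v.b.val) * T ^ m.val := by
    have hcast : ∀ t : ZMod p, ((t.val : ℕ) : ZMod p) = t := fun t => by
      simp [ZMod.natCast_val, ZMod.cast_id]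
    rw [hTval]
    have h2' : (2 : ZMod p) * ((v.a * v.b - v.e) * (2 : ZMod p)⁻¹) = v.a * v.b - v.e := by
      field_simp
    ext <;> simp [pow_def, hG1, hG2, hcast, hm]
    linear_combination h2'
  rw [key]
  exact Subgroup.mul_mem _ (Subgroup.mul_mem _ (Subgroup.pow_mem _ hm1 _)
    (Subgroup.pow_mem _ hm2 _)) (Subgroup.pow_mem _ hmT _)

end Heis

/-! ### Automorphisms of the Artin–Mumford extension -/

section AMConstruction

variable (p : ℕ) [Fact (Nat.Prime p)] (K : Type*) [Field K] [CharP K p] (c : K)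

/-- Translation `X ↦ X + α`, `Y ↦ Y + β` on the polynomial ring. -/
noncomputable def amTau (α β : K) : MvPolynomial (Fin 2) K →ₐ[K] MvPolynomial (Fin 2) K :=
  aeval ![X 0 + C α, X 1 + C β]

@[simp] lemma amTau_X0 (α β : K) : amTau K α β (X 0) = X 0 + C α := by
  simp [amTau]

@[simp] lemma amTau_X1 (α β : K) : amTau K α β (X 1) = X 1 + C β := by
  simp [amTau]

@[simp] lemma amTau_C (α β k : K) : amTau K α β (C k) = C k := by
  simpa only [MvPolynomial.algebraMap_eq] using (amTau K α β).commutes k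

lemma amTau_comp (α β α' β' : K) :
    (amTau K α β).comp (amTau K α' β') = amTau K (α + α') (β + β') := by
  apply MvPolynomial.algHom_ext
  intro i
  fin_cases i <;> simp [map_add, add_assoc, add_comm, add_left_comm]

lemma amTau_zero : amTau K 0 0 = AlgHom.id K _ := by
  apply MvPolynomial.algHom_ext
  intro i
  fin_cases i <;> simp

/-- The translation as an algebra equivalence. -/
noncomputable def amTauE (α β : K) : MvPolynomial (Fin 2) K ≃ₐ[K] MvPolynomial (Fin 2) K :=
  AlgEquiv.ofAlgHom (amTau K α β) (amTau K (-α) (-β))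
    (by rw [amTau_comp, add_neg_cancel, add_neg_cancel, amTau_zero])
    (by rw [amTau_comp, neg_add_cancel, neg_add_cancel, amTau_zero])

@[simp] lemma amTauE_apply (α β : K) (P : MvPolynomial (Fin 2) K) :
    amTauE K α β P = amTau K α β P := rfl

lemma amTau_amPoly (α β : K) (hα : α ^ p = α) (hβ : β ^ p = β) :
    amTau K α β (amPoly p K c) = amPoly p K c := by
  rw [amPoly, map_sub, map_mul, map_sub, map_sub, map_pow, map_pow, amTau_X0, amTau_X1,
    amTau_C, add_pow_char, add_pow_char, ← C_pow, ← C_pow, hα, hβ]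
  ring

/-- The induced automorphism of the coordinate ring. -/
noncomputable def amSig (α β : K) (hα : α ^ p = α) (hβ : β ^ p = β) :
    amRing p K c ≃ₐ[K] amRing p K c :=
  Ideal.quotientEquivAlg _ _ (amTauE K α β)
    (by
      have hfix : (amTauE K α β : MvPolynomial (Fin 2) K →+* MvPolynomial (Fin 2) K)
          (amPoly p K c) = amPoly p K c := amTau_amPoly p K c α β hα hβ
      rw [Ideal.map_span, Set.image_singleton, hfix])

lemma amSig_mk (α β : K) (hα : α ^ p = α) (hβ : β ^ p = β) (P : MvPolynomial (Fin 2) K) :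
    amSig p K c α β hα hβ (Ideal.Quotient.mk _ P) =
      Ideal.Quotient.mk _ (amTau K α β P) := by
  simp [amSig, Ideal.quotientEquivAlg, Ideal.quotientEquiv]

variable [IsDomain (amRing p K c)]

/-- The image of `X` in the function field. -/
noncomputable def amX : FractionRing (amRing p K c) :=
  algebraMap (amRing p K c) (FractionRing (amRing p K c))
    (Ideal.Quotient.mk (Ideal.span {amPoly p K c}) (X 0))

/-- The image of `Y` in the function field. -/
noncomputable def amY : FractionRing (amRing p K c) :=
  algebraMap (amRing p K c) (FractionRing (amRing p K c))
    (Ideal.Quotient.mk (Ideal.span {amPoly p K c}) (X 1))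

/-- `u = x yᵖ - xᵖ y`. -/
noncomputable def amU : FractionRing (amRing p K c) :=
  amX p K c * amY p K c ^ p - amX p K c ^ p * amY p K c

/-- The Artin–Schreier polynomial `Zᵖ - Z - u`. -/
noncomputable def amQ : Polynomial (FractionRing (amRing p K c)) :=
  Polynomial.X ^ p - Polynomial.X - Polynomial.C (amU p K c)

/-- `x` in the Artin–Schreier extension. -/
noncomputable def amXX : AdjoinRoot (amQ p K c) :=
  algebraMap (FractionRing (amRing p K c)) (AdjoinRoot (amQ p K c)) (amX p K c)

/-- `y` in the Artin–Schreier extension. -/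
noncomputable def amYY : AdjoinRoot (amQ p K c) :=
  algebraMap (FractionRing (amRing p K c)) (AdjoinRoot (amQ p K c)) (amY p K c)

/-- The twisted embedding of the coordinate ring into the extension. -/
noncomputable def amJ (α β : K) (hα : α ^ p = α) (hβ : β ^ p = β) :
    amRing p K c →+* AdjoinRoot (amQ p K c) :=
  ((algebraMap (FractionRing (amRing p K c)) (AdjoinRoot (amQ p K c))).comp
    (algebraMap (amRing p K c) (FractionRing (amRing p K c)))).comp
    ((amSig p K c α β hα hβ : amRing p K c ≃ₐ[K] amRing p K c) :
      amRing p K c →+* amRing p K c)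

lemma amJ_inj (hirr : Irreducible (amQ p K c)) (α β : K) (hα : α ^ p = α) (hβ : β ^ p = β) :
    Function.Injective (amJ p K c α β hα hβ) := by
  haveI : Fact (Irreducible (amQ p K c)) := ⟨hirr⟩
  have h1 : Function.Injective
      ⇑(algebraMap (FractionRing (amRing p K c)) (AdjoinRoot (amQ p K c))) :=
    (algebraMap (FractionRing (amRing p K c)) (AdjoinRoot (amQ p K c))).injective
  have h2 := IsFractionRing.injective (amRing p K c) (FractionRing (amRing p K c))
  have h3 : Function.Injective ⇑(amSig p K c α β hα hβ) :=
    (amSig p K c α β hα hβ).injective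
  rw [amJ, RingHom.coe_comp, RingHom.coe_comp]
  exact (h1.comp h2).comp h3

/-- The twisted embedding of the function field into the extension. -/
noncomputable def amLift (hirr : Irreducible (amQ p K c)) (α β : K)
    (hα : α ^ p = α) (hβ : β ^ p = β) :
    FractionRing (amRing p K c) →+* AdjoinRoot (amQ p K c) :=
  haveI : Fact (Irreducible (amQ p K c)) := ⟨hirr⟩
  IsFractionRing.lift (amJ_inj p K c hirr α β hα hβ)

lemma amLift_algebraMapR (hirr : Irreducible (amQ p K c)) (α β : K)
    (hα : α ^ p = α) (hβ : β ^ p = β) (r : amRing p K c) :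
    amLift p K c hirr α β hα hβ (algebraMap (amRing p K c) _ r) =
      algebraMap (FractionRing (amRing p K c)) (AdjoinRoot (amQ p K c))
        (algebraMap (amRing p K c) _ (amSig p K c α β hα hβ r)) := by
  haveI : Fact (Irreducible (amQ p K c)) := ⟨hirr⟩
  exact IsFractionRing.lift_algebraMap _ r

lemma amLift_X (hirr : Irreducible (amQ p K c)) (α β : K)
    (hα : α ^ p = α) (hβ : β ^ p = β) :
    amLift p K c hirr α β hα hβ (amX p K c) = amXX p K c + algebraMap K _ α := by
  haveI : IsScalarTower K (FractionRing (amRing p K c)) (AdjoinRoot (amQ p K c)) :=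
    inferInstance
  rw [amX, amLift_algebraMapR, amSig_mk, amTau_X0, map_add, map_add, amXX, amX]
  rw [← MvPolynomial.algebraMap_eq, ← Ideal.Quotient.algebraMap_eq,
    ← IsScalarTower.algebraMap_apply, ← IsScalarTower.algebraMap_apply,
    ← IsScalarTower.algebraMap_apply, map_add,
    ← IsScalarTower.algebraMap_apply K (FractionRing (amRing p K c)) (AdjoinRoot (amQ p K c))]

lemma amLift_Y (hirr : Irreducible (amQ p K c)) (α β : K)
    (hα : α ^ p = α) (hβ : β ^ p = β) :
    amLift p K c hirr α β hα hβ (amY p K c) = amYY p K c + algebraMap K _ β := by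
  haveI : IsScalarTower K (FractionRing (amRing p K c)) (AdjoinRoot (amQ p K c)) :=
    inferInstance
  rw [amY, amLift_algebraMapR, amSig_mk, amTau_X1, map_add, map_add, amYY, amY]
  rw [← MvPolynomial.algebraMap_eq, ← Ideal.Quotient.algebraMap_eq,
    ← IsScalarTower.algebraMap_apply, ← IsScalarTower.algebraMap_apply,
    ← IsScalarTower.algebraMap_apply, map_add,
    ← IsScalarTower.algebraMap_apply K (FractionRing (amRing p K c)) (AdjoinRoot (amQ p K c))]

lemma amLift_algebraMapK (hirr : Irreducible (amQ p K c)) (α β : K)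
    (hα : α ^ p = α) (hβ : β ^ p = β) (k : K) :
    amLift p K c hirr α β hα hβ (algebraMap K _ k) = algebraMap K _ k := by
  haveI : IsScalarTower K (FractionRing (amRing p K c)) (AdjoinRoot (amQ p K c)) :=
    inferInstance
  rw [IsScalarTower.algebraMap_apply K (amRing p K c) (FractionRing (amRing p K c)),
    amLift_algebraMapR, AlgEquiv.commutes,
    ← IsScalarTower.algebraMap_apply K (amRing p K c) (FractionRing (amRing p K c)),
    ← IsScalarTower.algebraMap_apply K (FractionRing (amRing p K c)) (AdjoinRoot (amQ p K c))]

lemma amCharP (hirr : Irreducible (amQ p K c)) : CharP (AdjoinRoot (amQ p K c)) p := by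
  haveI : Fact (Irreducible (amQ p K c)) := ⟨hirr⟩
  exact charP_of_injective_algebraMap (algebraMap K (AdjoinRoot (amQ p K c))).injective p

lemma amU_map (hirr : Irreducible (amQ p K c)) :
    algebraMap (FractionRing (amRing p K c)) (AdjoinRoot (amQ p K c)) (amU p K c) =
      amXX p K c * amYY p K c ^ p - amXX p K c ^ p * amYY p K c := by
  rw [amU, map_sub, map_mul, map_mul, map_pow, map_pow, amXX, amYY]

lemma amLift_U (hirr : Irreducible (amQ p K c)) (α β : K)
    (hα : α ^ p = α) (hβ : β ^ p = β) :
    amLift p K c hirr α β hα hβ (amU p K c) =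
      algebraMap (FractionRing (amRing p K c)) (AdjoinRoot (amQ p K c)) (amU p K c)
        - algebraMap K _ β * (amXX p K c ^ p - amXX p K c)
        + algebraMap K _ α * (amYY p K c ^ p - amYY p K c) := by
  haveI : Fact (Irreducible (amQ p K c)) := ⟨hirr⟩
  haveI : CharP (AdjoinRoot (amQ p K c)) p := amCharP p K c hirr
  have hA : (algebraMap K (AdjoinRoot (amQ p K c)) α) ^ p = algebraMap K _ α := by
    rw [← map_pow, hα]
  have hB : (algebraMap K (AdjoinRoot (amQ p K c)) β) ^ p = algebraMap K _ β := by
    rw [← map_pow, hβ]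
  rw [amU_map p K c hirr, amU, map_sub, map_mul, map_mul, map_pow, map_pow, amLift_X, amLift_Y,
    add_pow_char, add_pow_char, hA, hB]
  ring

/-- The element `-β·x + α·y + ε` used to shift the Artin–Schreier root. -/
noncomputable def amW (α β ε : K) : AdjoinRoot (amQ p K c) :=
  algebraMap K _ (-β) * amXX p K c + algebraMap K _ α * amYY p K c + algebraMap K _ ε

lemma amRoot_pow (hirr : Irreducible (amQ p K c)) :
    AdjoinRoot.root (amQ p K c) ^ p = AdjoinRoot.root (amQ p K c) +
      algebraMap (FractionRing (amRing p K c)) (AdjoinRoot (amQ p K c)) (amU p K c) := by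
  have h : Polynomial.eval₂ (AdjoinRoot.of (amQ p K c)) (AdjoinRoot.root (amQ p K c))
      (Polynomial.X ^ p - Polynomial.X - Polynomial.C (amU p K c)) = 0 :=
    AdjoinRoot.eval₂_root (amQ p K c)
  rw [Polynomial.eval₂_sub, Polynomial.eval₂_sub, Polynomial.eval₂_pow,
    Polynomial.eval₂_X, Polynomial.eval₂_C] at h
  rw [AdjoinRoot.algebraMap_eq]
  linear_combination h

lemma amQ_eval (hirr : Irreducible (amQ p K c)) (hodd : Odd p) (α β ε : K)
    (hα : α ^ p = α) (hβ : β ^ p = β) (hε : ε ^ p = ε) :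
    Polynomial.eval₂ (amLift p K c hirr α β hα hβ)
      (AdjoinRoot.root (amQ p K c) + amW p K c α β ε) (amQ p K c) = 0 := by
  haveI : Fact (Irreducible (amQ p K c)) := ⟨hirr⟩
  haveI : CharP (AdjoinRoot (amQ p K c)) p := amCharP p K c hirr
  have hA : (algebraMap K (AdjoinRoot (amQ p K c)) α) ^ p = algebraMap K _ α := by
    rw [← map_pow, hα]
  have hB : (algebraMap K (AdjoinRoot (amQ p K c)) (-β)) ^ p = algebraMap K _ (-β) := by
    rw [← map_pow, hodd.neg_pow, hβ]
  have hE : (algebraMap K (AdjoinRoot (amQ p K c)) ε) ^ p = algebraMap K _ ε := by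
    rw [← map_pow, hε]
  have hW : amW p K c α β ε ^ p =
      algebraMap K _ (-β) * amXX p K c ^ p + algebraMap K _ α * amYY p K c ^ p
        + algebraMap K _ ε := by
    rw [amW, add_pow_char, add_pow_char, mul_pow, mul_pow, hA, hB, hE]
  show Polynomial.eval₂ (amLift p K c hirr α β hα hβ)
    (AdjoinRoot.root (amQ p K c) + amW p K c α β ε)
    (Polynomial.X ^ p - Polynomial.X - Polynomial.C (amU p K c)) = 0
  rw [Polynomial.eval₂_sub, Polynomial.eval₂_sub, Polynomial.eval₂_pow,
    Polynomial.eval₂_X, Polynomial.eval₂_C, add_pow_char, hW, amRoot_pow p K c hirr,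
    amLift_U p K c hirr α β hα hβ, amU_map p K c hirr, amW]
  simp only [map_neg]
  ring

/-- The twisted endomorphism of the Artin–Schreier extension. -/
noncomputable def amPsiHom (hirr : Irreducible (amQ p K c)) (hodd : Odd p) (α β ε : K)
    (hα : α ^ p = α) (hβ : β ^ p = β) (hε : ε ^ p = ε) :
    AdjoinRoot (amQ p K c) →+* AdjoinRoot (amQ p K c) :=
  AdjoinRoot.lift (amLift p K c hirr α β hα hβ)
    (AdjoinRoot.root (amQ p K c) + amW p K c α β ε)
    (amQ_eval p K c hirr hodd α β ε hα hβ hε)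

lemma amPsiHom_X (hirr : Irreducible (amQ p K c)) (hodd : Odd p) (α β ε : K)
    (hα : α ^ p = α) (hβ : β ^ p = β) (hε : ε ^ p = ε) :
    amPsiHom p K c hirr hodd α β ε hα hβ hε (amXX p K c) = amXX p K c + algebraMap K _ α := by
  have h : amXX p K c = AdjoinRoot.of (amQ p K c) (amX p K c) := by
    rw [amXX, AdjoinRoot.algebraMap_eq]
  rw [amPsiHom]
  nth_rewrite 1 [h]
  rw [AdjoinRoot.lift_of, amLift_X]

lemma amPsiHom_Y (hirr : Irreducible (amQ p K c)) (hodd : Odd p) (α β ε : K)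
    (hα : α ^ p = α) (hβ : β ^ p = β) (hε : ε ^ p = ε) :
    amPsiHom p K c hirr hodd α β ε hα hβ hε (amYY p K c) = amYY p K c + algebraMap K _ β := by
  have h : amYY p K c = AdjoinRoot.of (amQ p K c) (amY p K c) := by
    rw [amYY, AdjoinRoot.algebraMap_eq]
  rw [amPsiHom]
  nth_rewrite 1 [h]
  rw [AdjoinRoot.lift_of, amLift_Y]

lemma amPsiHom_root (hirr : Irreducible (amQ p K c)) (hodd : Odd p) (α β ε : K)
    (hα : α ^ p = α) (hβ : β ^ p = β) (hε : ε ^ p = ε) :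
    amPsiHom p K c hirr hodd α β ε hα hβ hε (AdjoinRoot.root (amQ p K c)) =
      AdjoinRoot.root (amQ p K c) + amW p K c α β ε := by
  rw [amPsiHom, AdjoinRoot.lift_root]

lemma amPsiHom_K (hirr : Irreducible (amQ p K c)) (hodd : Odd p) (α β ε : K)
    (hα : α ^ p = α) (hβ : β ^ p = β) (hε : ε ^ p = ε) (k : K) :
    amPsiHom p K c hirr hodd α β ε hα hβ hε (algebraMap K _ k) = algebraMap K _ k := by
  haveI : Fact (Irreducible (amQ p K c)) := ⟨hirr⟩
  haveI : IsScalarTower K (FractionRing (amRing p K c)) (AdjoinRoot (amQ p K c)) :=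
    inferInstance
  rw [IsScalarTower.algebraMap_apply K (FractionRing (amRing p K c)) (AdjoinRoot (amQ p K c)),
    AdjoinRoot.algebraMap_eq, amPsiHom, AdjoinRoot.lift_of, amLift_algebraMapK,
    IsScalarTower.algebraMap_apply K (FractionRing (amRing p K c)) (AdjoinRoot (amQ p K c)),
    AdjoinRoot.algebraMap_eq]

/-- Extensionality: a ring endomorphism of `F'` is determined by its values on `K`, `x`, `y`
and the Artin–Schreier root. -/
lemma amExt (f₁ f₂ : AdjoinRoot (amQ p K c) →+* AdjoinRoot (amQ p K c))
    (hK : ∀ k : K, f₁ (algebraMap K _ k) = f₂ (algebraMap K _ k))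
    (hX : f₁ (amXX p K c) = f₂ (amXX p K c))
    (hY : f₁ (amYY p K c) = f₂ (amYY p K c))
    (hZ : f₁ (AdjoinRoot.root (amQ p K c)) = f₂ (AdjoinRoot.root (amQ p K c))) :
    f₁ = f₂ := by
  haveI : IsScalarTower K (FractionRing (amRing p K c)) (AdjoinRoot (amQ p K c)) :=
    inferInstance
  have hF : f₁.comp (AdjoinRoot.of (amQ p K c)) = f₂.comp (AdjoinRoot.of (amQ p K c)) := by
    apply IsLocalization.ringHom_ext (nonZeroDivisors (amRing p K c))
    rw [← RingHom.cancel_right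
      (Ideal.Quotient.mk_surjective (I := Ideal.span {amPoly p K c}))]
    apply MvPolynomial.ringHom_ext
    · intro k
      have hc : algebraMap (amRing p K c) (FractionRing (amRing p K c))
          (Ideal.Quotient.mk (Ideal.span {amPoly p K c}) (C k)) = algebraMap K _ k := by
        rw [← MvPolynomial.algebraMap_eq, ← Ideal.Quotient.algebraMap_eq,
          ← IsScalarTower.algebraMap_apply, ← IsScalarTower.algebraMap_apply]
      simp only [RingHom.comp_apply, ← AdjoinRoot.algebraMap_eq, hc,
        ← IsScalarTower.algebraMap_apply K (FractionRing (amRing p K c))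
          (AdjoinRoot (amQ p K c))]
      exact hK k
    · intro i
      have eX : (AdjoinRoot.of (amQ p K c)) (amX p K c) = amXX p K c := by
        rw [amXX, AdjoinRoot.algebraMap_eq]
      have eY : (AdjoinRoot.of (amQ p K c)) (amY p K c) = amYY p K c := by
        rw [amYY, AdjoinRoot.algebraMap_eq]
      fin_cases i
      · show f₁ ((AdjoinRoot.of (amQ p K c)) (amX p K c)) =
          f₂ ((AdjoinRoot.of (amQ p K c)) (amX p K c))
        rw [eX]; exact hX
      · show f₁ ((AdjoinRoot.of (amQ p K c)) (amY p K c)) =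
          f₂ ((AdjoinRoot.of (amQ p K c)) (amY p K c))
        rw [eY]; exact hY
  rw [← RingHom.cancel_right (AdjoinRoot.mk_surjective (g := amQ p K c))]
  apply Polynomial.ringHom_ext
  · intro a
    simp only [RingHom.comp_apply, AdjoinRoot.mk_C]
    exact RingHom.congr_fun hF a
  · simp only [RingHom.comp_apply, AdjoinRoot.mk_X]
    exact hZ

/-- The reduction `ZMod p →+* K`. -/
noncomputable def amChi : ZMod p →+* K := ZMod.castHom (dvd_refl p) K

lemma amChi_fix (t : ZMod p) : (amChi p K t) ^ p = amChi p K t := by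
  rw [← map_pow, ZMod.pow_card]

lemma amChi_neg_fix (t : ZMod p) : (-amChi p K t) ^ p = -amChi p K t := by
  rw [← map_neg, ← map_pow, ZMod.pow_card]

variable [IsDomain (amRing p K c)]

/-- The ring endomorphism of `F'` attached to an element of the Heisenberg group. -/
noncomputable def amAutHom (hirr : Irreducible (amQ p K c)) (hodd : Odd p) (v : Heis p) :
    AdjoinRoot (amQ p K c) →+* AdjoinRoot (amQ p K c) :=
  amPsiHom p K c hirr hodd (amChi p K v.a) (-amChi p K v.b) (amChi p K v.e)
    (amChi_fix p K v.a) (amChi_neg_fix p K v.b) (amChi_fix p K v.e)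

lemma amAutHom_comp (hirr : Irreducible (amQ p K c)) (hodd : Odd p) (v w : Heis p) :
    (amAutHom p K c hirr hodd v).comp (amAutHom p K c hirr hodd w) =
      amAutHom p K c hirr hodd (v * w) := by
  apply amExt
  · intro k
    simp only [RingHom.comp_apply, amAutHom, amPsiHom_K]
  · simp only [RingHom.comp_apply, amAutHom, amPsiHom_X, map_add, amPsiHom_K, Heis.mul_a]
    ring
  · simp only [RingHom.comp_apply, amAutHom, amPsiHom_Y, map_add, map_neg, amPsiHom_K,
      Heis.mul_b]
    ring
  · simp only [RingHom.comp_apply, amAutHom, amPsiHom_root, amW, map_add, map_mul, map_neg,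
      map_sub, amPsiHom_X, amPsiHom_Y, amPsiHom_K, Heis.mul_a, Heis.mul_b, Heis.mul_e]
    ring

lemma amAutHom_one (hirr : Irreducible (amQ p K c)) (hodd : Odd p) :
    amAutHom p K c hirr hodd 1 = RingHom.id _ := by
  apply amExt
  · intro k
    simp only [amAutHom, amPsiHom_K, RingHom.id_apply]
  · simp only [amAutHom, amPsiHom_X, Heis.one_a, map_zero, add_zero, RingHom.id_apply]
  · simp only [amAutHom, amPsiHom_Y, Heis.one_b, map_zero, neg_zero, add_zero,
      RingHom.id_apply]
  · simp only [amAutHom, amPsiHom_root, amW, Heis.one_a, Heis.one_b, Heis.one_e, map_zero,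
      neg_zero, zero_mul, add_zero, zero_add, RingHom.id_apply]

/-- The `K`-automorphism of `F'` attached to an element of the Heisenberg group. -/
noncomputable def amAut (hirr : Irreducible (amQ p K c)) (hodd : Odd p) (v : Heis p) :
    AdjoinRoot (amQ p K c) ≃ₐ[K] AdjoinRoot (amQ p K c) where
  toFun := amAutHom p K c hirr hodd v
  invFun := amAutHom p K c hirr hodd v⁻¹
  left_inv t := by
    have h : (amAutHom p K c hirr hodd v⁻¹).comp (amAutHom p K c hirr hodd v) =
        RingHom.id _ := by
      rw [amAutHom_comp, inv_mul_cancel, amAutHom_one]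
    exact RingHom.congr_fun h t
  right_inv t := by
    have h : (amAutHom p K c hirr hodd v).comp (amAutHom p K c hirr hodd v⁻¹) =
        RingHom.id _ := by
      rw [amAutHom_comp, mul_inv_cancel, amAutHom_one]
    exact RingHom.congr_fun h t
  map_mul' := (amAutHom p K c hirr hodd v).map_mul
  map_add' := (amAutHom p K c hirr hodd v).map_add
  commutes' k := amPsiHom_K p K c hirr hodd _ _ _ _ _ _ k

lemma amAut_apply (hirr : Irreducible (amQ p K c)) (hodd : Odd p) (v : Heis p)
    (t : AdjoinRoot (amQ p K c)) :
    amAut p K c hirr hodd v t = amAutHom p K c hirr hodd v t := rfl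

/-- The representation of the Heisenberg group by `K`-automorphisms of `F'`. -/
noncomputable def amRep (hirr : Irreducible (amQ p K c)) (hodd : Odd p) :
    Heis p →* (AdjoinRoot (amQ p K c) ≃ₐ[K] AdjoinRoot (amQ p K c)) where
  toFun := amAut p K c hirr hodd
  map_one' := by
    apply AlgEquiv.ext
    intro t
    rw [amAut_apply, amAutHom_one]
    rfl
  map_mul' v w := by
    apply AlgEquiv.ext
    intro t
    rw [AlgEquiv.mul_apply, amAut_apply, amAut_apply, amAut_apply, ← amAutHom_comp]
    rfl

lemma amRep_inj (hirr : Irreducible (amQ p K c)) (hodd : Odd p) :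
    Function.Injective (amRep p K c hirr hodd) := by
  haveI : Fact (Irreducible (amQ p K c)) := ⟨hirr⟩
  have hKinj : Function.Injective (algebraMap K (AdjoinRoot (amQ p K c))) :=
    (algebraMap K (AdjoinRoot (amQ p K c))).injective
  have hchi : Function.Injective (amChi p K) := (amChi p K).injective
  rw [injective_iff_map_eq_one]
  intro v hv
  have hv' : amAut p K c hirr hodd v = 1 := hv
  have hx : amAutHom p K c hirr hodd v (amXX p K c) = amXX p K c := by
    rw [← amAut_apply, hv']; rfl
  have hy : amAutHom p K c hirr hodd v (amYY p K c) = amYY p K c := by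
    rw [← amAut_apply, hv']; rfl
  have hz : amAutHom p K c hirr hodd v (AdjoinRoot.root (amQ p K c)) =
      AdjoinRoot.root (amQ p K c) := by
    rw [← amAut_apply, hv']; rfl
  rw [amAutHom, amPsiHom_X, add_eq_left] at hx
  rw [amAutHom, amPsiHom_Y, add_eq_left, ← map_neg] at hy
  have ha : v.a = 0 := hchi (by rw [map_zero]; exact hKinj (by rw [hx, map_zero]))
  have hb : v.b = 0 := by
    have h1 : amChi p K (-v.b) = 0 := hKinj (by rw [hy, map_zero])
    have h2 : -v.b = 0 := hchi (by rw [h1, map_zero])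
    simpa using h2
  rw [amAutHom, amPsiHom_root, add_eq_left, amW, ha, hb] at hz
  simp only [map_zero, neg_zero, zero_mul, add_zero, zero_add] at hz
  have he : v.e = 0 := hchi (by rw [map_zero]; exact hKinj (by rw [hz, map_zero]))
  ext <;> simp [ha, hb, he]

end AMConstruction

lemma zmod_two_ne_zero (p : ℕ) [Fact (Nat.Prime p)] (hodd : Odd p) : (2 : ZMod p) ≠ 0 := by
  intro h
  have hdvd : p ∣ 2 := by
    rwa [show (2 : ZMod p) = ((2 : ℕ) : ZMod p) by norm_cast,
      ZMod.natCast_eq_zero_iff] at h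
  have hp2 : p = 2 := (Nat.prime_dvd_prime_iff_eq (Fact.out : p.Prime) Nat.prime_two).mp hdvd
  rw [hp2] at hodd
  rcases hodd with ⟨k, hk⟩; omega

/-- Master lemma: the two generating automorphisms and the structure of the group they
generate. -/
lemma am_main (p : ℕ) (hp : p.Prime) (hodd : Odd p) (K : Type*) [Field K] [CharP K p]
    (c : K) [IsDomain (amRing p K c)] (hirr : Irreducible (amQ p K c)) :
    ∃ g h : AdjoinRoot (amQ p K c) ≃ₐ[K] AdjoinRoot (amQ p K c),
      g (amXX p K c) = amXX p K c + 1 ∧ g (amYY p K c) = amYY p K c ∧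
      g (AdjoinRoot.root (amQ p K c)) = AdjoinRoot.root (amQ p K c) + amYY p K c ∧
      h (amXX p K c) = amXX p K c ∧ h (amYY p K c) = amYY p K c - 1 ∧
      h (AdjoinRoot.root (amQ p K c)) = AdjoinRoot.root (amQ p K c) + amXX p K c ∧
      Nat.card (Subgroup.closure
        ({g, h} : Set (AdjoinRoot (amQ p K c) ≃ₐ[K] AdjoinRoot (amQ p K c)))) = p ^ 3 ∧
      (¬ ∀ a ∈ Subgroup.closure
            ({g, h} : Set (AdjoinRoot (amQ p K c) ≃ₐ[K] AdjoinRoot (amQ p K c))),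
          ∀ b ∈ Subgroup.closure
            ({g, h} : Set (AdjoinRoot (amQ p K c) ≃ₐ[K] AdjoinRoot (amQ p K c))),
            a * b = b * a) ∧
      (∀ σ ∈ Subgroup.closure
          ({g, h} : Set (AdjoinRoot (amQ p K c) ≃ₐ[K] AdjoinRoot (amQ p K c))), σ ^ p = 1) := by
  haveI : Fact (Nat.Prime p) := ⟨hp⟩
  set Ψ := amRep p K c hirr hodd with hΨ
  set g := Ψ (⟨1, 0, 0⟩ : Heis p) with hgdef
  set h := Ψ (⟨0, 1, 0⟩ : Heis p) with hhdef
  have hrange : Subgroup.closure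
      ({g, h} : Set (AdjoinRoot (amQ p K c) ≃ₐ[K] AdjoinRoot (amQ p K c))) = Ψ.range := by
    have himg : ({g, h} : Set (AdjoinRoot (amQ p K c) ≃ₐ[K] AdjoinRoot (amQ p K c))) =
        Ψ '' ({⟨1, 0, 0⟩, ⟨0, 1, 0⟩} : Set (Heis p)) := by
      rw [Set.image_insert_eq, Set.image_singleton]
    have htop : Subgroup.closure ({⟨1, 0, 0⟩, ⟨0, 1, 0⟩} : Set (Heis p)) = ⊤ :=
      eq_top_iff.mpr fun v _ => Heis.mem_closure hodd v
    rw [himg, ← MonoidHom.map_closure, htop, ← MonoidHom.range_eq_map]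
  refine ⟨g, h, ?_, ?_, ?_, ?_, ?_, ?_, ?_, ?_, ?_⟩
  · show amAutHom p K c hirr hodd ⟨1, 0, 0⟩ (amXX p K c) = amXX p K c + 1
    rw [amAutHom, amPsiHom_X, map_one, map_one]
  · show amAutHom p K c hirr hodd ⟨1, 0, 0⟩ (amYY p K c) = amYY p K c
    rw [amAutHom, amPsiHom_Y]
    simp only [map_zero, neg_zero, add_zero]
  · show amAutHom p K c hirr hodd ⟨1, 0, 0⟩ (AdjoinRoot.root (amQ p K c)) =
      AdjoinRoot.root (amQ p K c) + amYY p K c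
    rw [amAutHom, amPsiHom_root, amW]
    simp only [map_zero, map_one, neg_zero, zero_mul, one_mul, add_zero, zero_add]
  · show amAutHom p K c hirr hodd ⟨0, 1, 0⟩ (amXX p K c) = amXX p K c
    rw [amAutHom, amPsiHom_X]
    simp only [map_zero, add_zero]
  · show amAutHom p K c hirr hodd ⟨0, 1, 0⟩ (amYY p K c) = amYY p K c - 1
    rw [amAutHom, amPsiHom_Y]
    simp only [map_one, map_neg, sub_eq_add_neg]
  · show amAutHom p K c hirr hodd ⟨0, 1, 0⟩ (AdjoinRoot.root (amQ p K c)) =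
      AdjoinRoot.root (amQ p K c) + amXX p K c
    rw [amAutHom, amPsiHom_root, amW]
    simp only [map_zero, map_one, map_neg, neg_neg, zero_mul, one_mul, add_zero, zero_add]
  · rw [hrange, Nat.card_congr
      (MonoidHom.ofInjective (amRep_inj p K c hirr hodd)).toEquiv.symm]
    exact Heis.card_eq hp.pos
  · intro habs
    have hgmem : g ∈ Subgroup.closure
        ({g, h} : Set (AdjoinRoot (amQ p K c) ≃ₐ[K] AdjoinRoot (amQ p K c))) :=
      Subgroup.subset_closure (Set.mem_insert _ _)
    have hhmem : h ∈ Subgroup.closure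
        ({g, h} : Set (AdjoinRoot (amQ p K c) ≃ₐ[K] AdjoinRoot (amQ p K c))) :=
      Subgroup.subset_closure (Set.mem_insert_of_mem _ rfl)
    have hcomm := habs g hgmem h hhmem
    have hvw : (⟨1, 0, 0⟩ : Heis p) * ⟨0, 1, 0⟩ = ⟨0, 1, 0⟩ * ⟨1, 0, 0⟩ :=
      amRep_inj p K c hirr hodd (by rw [map_mul, map_mul]; exact hcomm)
    have he := congrArg Heis.e hvw
    simp only [Heis.mul_e] at he
    have : (2 : ZMod p) = 0 := by linear_combination he
    exact zmod_two_ne_zero p hodd this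
  · intro σ hσ
    rw [hrange] at hσ
    obtain ⟨v, rfl⟩ := MonoidHom.mem_range.mp hσ
    rw [← map_pow]
    have hv : v ^ p = 1 := by
      rw [Heis.pow_def]
      ext <;> simp [ZMod.natCast_self]
    rw [hv, map_one]

/-- On the degree-`p` extension `F′ = F[Z]/(Zᵖ - Z - u)` of the function field `F` of the
Artin–Mumford curve, there are `K`-automorphisms `g, h` with `g(x) = x+1`, `g(y) = y`,
`g(z) = z+y` and `h(x) = x`, `h(y) = y-1`, `h(z) = z+x`, and `⟨g, h⟩` is a non-abelian group
of order `p³` and exponent `p`. -/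
theorem am_extension_nonabelian_p_cubed (p : ℕ) (hp : p.Prime) (hodd : Odd p)
    (K : Type*) [Field K] [IsAlgClosed K] [CharP K p] (c : K) (hc : c ≠ 0)
    [IsDomain (amRing p K c)]
    (x y : FractionRing (amRing p K c))
    (hx : x = algebraMap (amRing p K c) (FractionRing (amRing p K c))
        (Ideal.Quotient.mk (Ideal.span {amPoly p K c}) (X 0)))
    (hy : y = algebraMap (amRing p K c) (FractionRing (amRing p K c))
        (Ideal.Quotient.mk (Ideal.span {amPoly p K c}) (X 1)))
    (u : FractionRing (amRing p K c)) (hu : u = x * y ^ p - x ^ p * y)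
    (q : Polynomial (FractionRing (amRing p K c)))
    (hq : q = Polynomial.X ^ p - Polynomial.X - Polynomial.C u)
    (hirr : Irreducible q)
    (xx yy zz : AdjoinRoot q)
    (hxx : xx = algebraMap (FractionRing (amRing p K c)) (AdjoinRoot q) x)
    (hyy : yy = algebraMap (FractionRing (amRing p K c)) (AdjoinRoot q) y)
    (hzz : zz = AdjoinRoot.root q) :
    ∃ g h : AdjoinRoot q ≃ₐ[K] AdjoinRoot q,
      g xx = xx + 1 ∧ g yy = yy ∧ g zz = zz + yy ∧
      h xx = xx ∧ h yy = yy - 1 ∧ h zz = zz + xx ∧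
      Nat.card (Subgroup.closure ({g, h} : Set (AdjoinRoot q ≃ₐ[K] AdjoinRoot q))) = p ^ 3 ∧
      (¬ ∀ a ∈ Subgroup.closure ({g, h} : Set (AdjoinRoot q ≃ₐ[K] AdjoinRoot q)),
          ∀ b ∈ Subgroup.closure ({g, h} : Set (AdjoinRoot q ≃ₐ[K] AdjoinRoot q)),
            a * b = b * a) ∧
      (∀ σ ∈ Subgroup.closure ({g, h} : Set (AdjoinRoot q ≃ₐ[K] AdjoinRoot q)), σ ^ p = 1) := by
  subst hx hy hu hq hxx hyy hzz
  exact am_main p hp hodd K c hirr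
end

section
/- Let p be an odd prime, K an algebraically closed field of characteristic p, and c a nonzero element of K. Let F be the field of fractions of K[X,Y]/((X^p − X)(Y^p − Y) − c), with x, y the images of X, Y. Then there exist K-automorphisms α and β of the field F determined by α(x) = x + 1, α(y) = y and β(x) = x, β(y) = y + 1; they satisfy α^p = id, β^p = id, α∘β = β∘α, α ≠ id, β ≠ id, and the subgroup of the K-automorphism group of F generated by α and β is an elementary abelian group of order p². -/
open MvPolynomial

set_option synthInstance.maxHeartbeats 1000000
set_option maxHeartbeats 1000000

set_option linter.unusedSectionVars false

section AM
variable (p : ℕ) [hfp : Fact p.Prime] (K : Type*) [Field K] [CharP K p] (c : K)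

noncomputable def amA (u : ZMod p × ZMod p) :
    MvPolynomial (Fin 2) K →ₐ[K] MvPolynomial (Fin 2) K :=
  aeval fun i => X i + C (ZMod.castHom (dvd_refl p) K (![u.1, u.2] i))

lemma amA_X (u : ZMod p × ZMod p) (i : Fin 2) :
    amA p K u (X i) = X i + C (ZMod.castHom (dvd_refl p) K (![u.1, u.2] i)) := by
  simp [amA]

lemma amA_C (u : ZMod p × ZMod p) (r : K) : amA p K u (C r) = C r := by
  simp [amA, algebraMap_eq]

lemma amA_comp (u v : ZMod p × ZMod p) :
    (amA p K u).comp (amA p K v) = amA p K (u + v) := by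
  apply MvPolynomial.algHom_ext
  intro i
  rw [AlgHom.comp_apply, amA_X, map_add, amA_X, amA_C, amA_X]
  fin_cases i <;> simp [map_add, C_add] <;> ring

lemma amA_zero : amA p K (0 : ZMod p × ZMod p) = AlgHom.id K _ := by
  apply MvPolynomial.algHom_ext
  intro i
  rw [amA_X, AlgHom.id_apply]
  fin_cases i <;> simp

lemma amA_key (n : Fin 2) (a : ZMod p) :
    (X n + C (ZMod.castHom (dvd_refl p) K a)) ^ p - (X n + C (ZMod.castHom (dvd_refl p) K a))
      = X n ^ p - X n := by
  rw [add_pow_char]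
  rw [← C_pow, ← map_pow, ZMod.pow_card]
  ring

lemma amA_amPoly (u : ZMod p × ZMod p) : amA p K u (amPoly p K c) = amPoly p K c := by
  rw [amPoly, map_sub, map_mul, map_sub, map_sub, map_pow, map_pow, amA_X, amA_X, amA_C,
    amA_key, amA_key]

/-- translation as an algebra equivalence of the polynomial ring -/
noncomputable def amAe (u : ZMod p × ZMod p) :
    MvPolynomial (Fin 2) K ≃ₐ[K] MvPolynomial (Fin 2) K :=
  AlgEquiv.ofAlgHom (amA p K u) (amA p K (-u))
    (by rw [amA_comp, add_neg_cancel, amA_zero])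
    (by rw [amA_comp, neg_add_cancel, amA_zero])

lemma amAe_map_span (u : ZMod p × ZMod p) :
    Ideal.span {amPoly p K c} =
      (Ideal.span {amPoly p K c}).map ((amAe p K u : MvPolynomial (Fin 2) K ≃ₐ[K] _) :
        MvPolynomial (Fin 2) K →+* MvPolynomial (Fin 2) K) := by
  rw [Ideal.map_span, Set.image_singleton]
  congr 1
  have : ((amAe p K u : MvPolynomial (Fin 2) K ≃ₐ[K] _) :
      MvPolynomial (Fin 2) K →+* MvPolynomial (Fin 2) K) (amPoly p K c) = amPoly p K c :=
    amA_amPoly p K c u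
  rw [this]

/-- translation on the coordinate ring -/
noncomputable def amB (u : ZMod p × ZMod p) : amRing p K c ≃ₐ[K] amRing p K c :=
  Ideal.quotientEquivAlg _ _ (amAe p K u) (amAe_map_span p K c u)

lemma amB_mk (u : ZMod p × ZMod p) (q : MvPolynomial (Fin 2) K) :
    amB p K c u (Ideal.Quotient.mk _ q) = Ideal.Quotient.mk _ (amA p K u q) := rfl

variable [IsDomain (amRing p K c)]

/-- translation on the function field -/
noncomputable def amE (u : ZMod p × ZMod p) :
    FractionRing (amRing p K c) ≃ₐ[K] FractionRing (amRing p K c) :=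
  IsFractionRing.algEquivOfAlgEquiv (amB p K c u)

lemma amE_algebraMap (u : ZMod p × ZMod p) (a : amRing p K c) :
    amE p K c u (algebraMap _ _ a) = algebraMap _ _ (amB p K c u a) :=
  IsFractionRing.algEquivOfAlgEquiv_algebraMap _ a


lemma amAut_ext {σ τ : FractionRing (amRing p K c) ≃ₐ[K] FractionRing (amRing p K c)}
    (h : ∀ a : amRing p K c, σ (algebraMap _ _ a) = τ (algebraMap _ _ a)) : σ = τ := by
  have h2 : (σ : FractionRing (amRing p K c) →+* FractionRing (amRing p K c)) =
      (τ : FractionRing (amRing p K c) →+* FractionRing (amRing p K c)) := by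
    apply IsLocalization.ringHom_ext (nonZeroDivisors (amRing p K c))
    exact RingHom.ext h
  ext z
  exact RingHom.congr_fun h2 z

lemma amE_add (u v : ZMod p × ZMod p) :
    amE p K c (u + v) = amE p K c u * amE p K c v := by
  apply amAut_ext
  intro a
  obtain ⟨q, rfl⟩ := Ideal.Quotient.mk_surjective a
  rw [AlgEquiv.mul_apply, amE_algebraMap, amB_mk, amE_algebraMap, amE_algebraMap, amB_mk,
    amB_mk, ← AlgHom.comp_apply, amA_comp]

lemma amE_zero : amE p K c (0 : ZMod p × ZMod p) = 1 := by
  apply amAut_ext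
  intro a
  obtain ⟨q, rfl⟩ := Ideal.Quotient.mk_surjective a
  rw [amE_algebraMap, amB_mk, amA_zero]
  rfl

lemma amE_nsmul (n : ℕ) (u : ZMod p × ZMod p) :
    amE p K c (n • u) = amE p K c u ^ n := by
  induction n with
  | zero => simpa using amE_zero p K c
  | succ n ih => rw [succ_nsmul, amE_add, ih, pow_succ]

lemma amE_x (u : ZMod p × ZMod p) (i : Fin 2) :
    amE p K c u (algebraMap (amRing p K c) (FractionRing (amRing p K c))
        (Ideal.Quotient.mk (Ideal.span {amPoly p K c}) (X i))) =
      algebraMap (amRing p K c) (FractionRing (amRing p K c))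
        (Ideal.Quotient.mk (Ideal.span {amPoly p K c}) (X i))
        + algebraMap K (FractionRing (amRing p K c))
            (ZMod.castHom (dvd_refl p) K (![u.1, u.2] i)) := by
  rw [amE_algebraMap, amB_mk, amA_X, map_add, map_add]
  congr 1

lemma amE_injective : Function.Injective (amE p K c) := by
  intro u v h
  have key : ∀ i : Fin 2,
      (ZMod.castHom (dvd_refl p) K (![u.1, u.2] i)) = (ZMod.castHom (dvd_refl p) K (![v.1, v.2] i)) := by
    intro i
    have h1 := amE_x p K c u i
    have h2 := amE_x p K c v i
    rw [h] at h1
    rw [h1] at h2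
    have h3 := add_left_cancel h2
    exact (algebraMap K (FractionRing (amRing p K c))).injective h3
  have h0 := (ZMod.castHom (dvd_refl p) K).injective (key 0)
  have h1 := (ZMod.castHom (dvd_refl p) K).injective (key 1)
  simp only [Matrix.cons_val_zero, Matrix.cons_val_one, Matrix.head_cons] at h0 h1
  exact Prod.ext h0 h1

lemma amE_psmul (u : ZMod p × ZMod p) : p • u = 0 := by
  have : ∀ a : ZMod p, p • a = 0 := by
    intro a
    rw [nsmul_eq_mul, ZMod.natCast_self, zero_mul]
  exact Prod.ext (this u.1) (this u.2)

lemma amE_decomp (u : ZMod p × ZMod p) :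
    u = u.1.val • ((1 : ZMod p), (0 : ZMod p)) + u.2.val • ((0 : ZMod p), (1 : ZMod p)) := by
  haveI : NeZero p := NeZero.of_pos hfp.out.pos
  apply Prod.ext <;>
    simp [ZMod.natCast_rightInverse u.1, ZMod.natCast_rightInverse u.2, nsmul_eq_mul,
      ZMod.natCast_val]

lemma amE_mem_closure_iff (σ : FractionRing (amRing p K c) ≃ₐ[K] FractionRing (amRing p K c)) :
    σ ∈ Subgroup.closure ({amE p K c (1, 0), amE p K c (0, 1)} :
      Set (FractionRing (amRing p K c) ≃ₐ[K] FractionRing (amRing p K c))) ↔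
      ∃ u : ZMod p × ZMod p, amE p K c u = σ := by
  constructor
  · intro hmem
    induction hmem using Subgroup.closure_induction with
    | mem τ hτ =>
      rcases hτ with h | h
      · exact ⟨(1, 0), h.symm⟩
      · exact ⟨(0, 1), h.symm⟩
    | one => exact ⟨0, amE_zero p K c⟩
    | mul σ τ _ _ hσ hτ =>
      obtain ⟨u, rfl⟩ := hσ
      obtain ⟨v, rfl⟩ := hτ
      exact ⟨u + v, amE_add p K c u v⟩
    | inv σ _ hσ =>
      obtain ⟨u, rfl⟩ := hσ
      refine ⟨-u, eq_inv_of_mul_eq_one_left ?_⟩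
      rw [← amE_add, neg_add_cancel, amE_zero]
  · rintro ⟨u, rfl⟩
    have h1 : amE p K c (1, 0) ∈ Subgroup.closure ({amE p K c (1, 0), amE p K c (0, 1)} :
        Set (FractionRing (amRing p K c) ≃ₐ[K] FractionRing (amRing p K c))) :=
      Subgroup.subset_closure (Set.mem_insert _ _)
    have h2 : amE p K c (0, 1) ∈ Subgroup.closure ({amE p K c (1, 0), amE p K c (0, 1)} :
        Set (FractionRing (amRing p K c) ≃ₐ[K] FractionRing (amRing p K c))) :=
      Subgroup.subset_closure (Set.mem_insert_of_mem _ rfl)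
    rw [amE_decomp p u, amE_add, amE_nsmul, amE_nsmul]
    exact mul_mem (pow_mem h1 _) (pow_mem h2 _)

end AM

/-- The function field `F` of the Artin–Mumford curve has `K`-automorphisms `α, β` with
`α(x) = x+1`, `α(y) = y`, `β(x) = x`, `β(y) = y+1`; they are non-trivial, commute, have order
dividing `p`, and generate an elementary abelian group of order `p²`. -/
theorem am_elementary_abelian_translations (p : ℕ) (hp : p.Prime) (hodd : Odd p)
    (K : Type*) [Field K] [IsAlgClosed K] [CharP K p] (c : K) (hc : c ≠ 0)
    [IsDomain (amRing p K c)]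
    (x y : FractionRing (amRing p K c))
    (hx : x = algebraMap (amRing p K c) (FractionRing (amRing p K c))
        (Ideal.Quotient.mk (Ideal.span {amPoly p K c}) (X 0)))
    (hy : y = algebraMap (amRing p K c) (FractionRing (amRing p K c))
        (Ideal.Quotient.mk (Ideal.span {amPoly p K c}) (X 1))) :
    ∃ α β : FractionRing (amRing p K c) ≃ₐ[K] FractionRing (amRing p K c),
      α x = x + 1 ∧ α y = y ∧ β x = x ∧ β y = y + 1 ∧
      α ^ p = 1 ∧ β ^ p = 1 ∧ α * β = β * α ∧ α ≠ 1 ∧ β ≠ 1 ∧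
      Nat.card (Subgroup.closure
        ({α, β} : Set (FractionRing (amRing p K c) ≃ₐ[K] FractionRing (amRing p K c)))) = p ^ 2 ∧
      (∀ σ ∈ Subgroup.closure
          ({α, β} : Set (FractionRing (amRing p K c) ≃ₐ[K] FractionRing (amRing p K c))),
        σ ^ p = 1) ∧
      (∀ σ ∈ Subgroup.closure
          ({α, β} : Set (FractionRing (amRing p K c) ≃ₐ[K] FractionRing (amRing p K c))),
        ∀ τ ∈ Subgroup.closure
          ({α, β} : Set (FractionRing (amRing p K c) ≃ₐ[K] FractionRing (amRing p K c))),
        σ * τ = τ * σ) := by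
  haveI : Fact p.Prime := ⟨hp⟩
  haveI : Fact (1 < p) := ⟨hp.one_lt⟩
  refine ⟨amE p K c (1, 0), amE p K c (0, 1), ?_, ?_, ?_, ?_, ?_, ?_, ?_, ?_, ?_, ?_, ?_, ?_⟩
  · rw [hx, amE_x]
    simp
  · rw [hy, amE_x]
    simp
  · rw [hx, amE_x]
    simp
  · rw [hy, amE_x]
    simp
  · rw [← amE_nsmul, amE_psmul, amE_zero]
  · rw [← amE_nsmul, amE_psmul, amE_zero]
  · rw [← amE_add, ← amE_add, add_comm]
  · intro h
    rw [← amE_zero p K c] at h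
    have := amE_injective p K c h
    simp [Prod.ext_iff] at this
  · intro h
    rw [← amE_zero p K c] at h
    have := amE_injective p K c h
    simp [Prod.ext_iff] at this
  · have hbij : Function.Bijective (fun u : ZMod p × ZMod p =>
        (⟨amE p K c u, (amE_mem_closure_iff p K c _).2 ⟨u, rfl⟩⟩ :
          Subgroup.closure ({amE p K c (1, 0), amE p K c (0, 1)} :
            Set (FractionRing (amRing p K c) ≃ₐ[K] FractionRing (amRing p K c))))) := by
      constructor
      · intro u v h
        exact amE_injective p K c (congrArg Subtype.val h)
      · rintro ⟨σ, hσ⟩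
        obtain ⟨u, rfl⟩ := (amE_mem_closure_iff p K c σ).1 hσ
        exact ⟨u, rfl⟩
    rw [Nat.card_congr (Equiv.ofBijective _ hbij).symm, Nat.card_prod, Nat.card_zmod, sq]
  · intro σ hσ
    obtain ⟨u, rfl⟩ := (amE_mem_closure_iff p K c σ).1 hσ
    rw [← amE_nsmul, amE_psmul, amE_zero]
  · intro σ hσ τ hτ
    obtain ⟨u, rfl⟩ := (amE_mem_closure_iff p K c σ).1 hσ
    obtain ⟨v, rfl⟩ := (amE_mem_closure_iff p K c τ).1 hτ
    rw [← amE_add, ← amE_add, add_comm]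
end

section
/- Let p ≥ 3 be a prime and let h ≥ 1 and g ≥ 2 be integers. If p^h·(p² − p − 1) > p²·(g − 1) and (p − 1)·p^h ≤ p·g, then h = 1 and g = p − 1. -/
/-- Numerical core of the paper's Lemma: if `p ≥ 3` is prime, `h ≥ 1`, `g ≥ 2`,
`p^h (p² - p - 1) > p² (g - 1)` and `(p - 1) p^h ≤ p g`, then `h = 1` and `g = p - 1`. -/
theorem stichtenoth_numerics (p h g : ℕ) (hp : p.Prime) (hp3 : 3 ≤ p)
    (hh : 1 ≤ h) (hg : 2 ≤ g)
    (H1 : p ^ h * (p ^ 2 - p - 1) > p ^ 2 * (g - 1))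
    (H2 : (p - 1) * p ^ h ≤ p * g) :
    h = 1 ∧ g = p - 1 := by
  have hp1 : 1 ≤ p := by omega
  have hpp : p + 1 ≤ p ^ 2 := by nlinarith
  have hg1 : 1 ≤ g := by omega
  zify [hp1, hg1, show 1 ≤ p ^ 2 - p by omega, show p ≤ p ^ 2 by omega] at H1 H2
  have hq : (p : ℤ) ≤ (p : ℤ) ^ h := by
    calc (p : ℤ) = (p : ℤ) ^ 1 := (pow_one _).symm
    _ ≤ (p : ℤ) ^ h := pow_le_pow_right₀ (by exact_mod_cast hp1) hh
  have hqlt : (p : ℤ) ^ h < (p : ℤ) ^ 2 := by nlinarith [pow_pos (show (0:ℤ) < p by positivity) h]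
  have h1 : h = 1 := by
    have := (pow_lt_pow_iff_right₀ (show (1:ℤ) < p by exact_mod_cast by omega)).mp hqlt
    omega
  subst h1
  refine ⟨rfl, ?_⟩
  rw [pow_one] at H1 H2
  have hgle : (g : ℤ) ≤ (p : ℤ) - 1 := by nlinarith
  have hgge : (p : ℤ) - 1 ≤ (g : ℤ) := by nlinarith
  omega
end

section
/- Let p ≥ 3 be a prime, let n ≥ 1 be an integer and set s = pⁿ. Let γ ≥ 2, γ̄ ≥ 0 and k ≥ 0 be integers, and let ℓ₁, …, ℓ_k be powers of p satisfying p ≤ ℓᵢ ≤ s/p for each i. If γ − 1 = s·(γ̄ − 1) + Σ_{i=1}^{k}(s − ℓᵢ) and p²·(γ − 1) < (p² − p − 1)·s, then γ̄ = 0, k = 2, and ℓ₁ = ℓ₂ = s/p. -/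
set_option maxHeartbeats 1000000

/-- Numerical core of the paper's Proposition via the Deuring–Shafarevich formula: with
`s = pⁿ`, `γ ≥ 2`, short orbit sizes `ℓᵢ` (powers of `p` with `p ≤ ℓᵢ ≤ s/p`), if
`γ - 1 = s(γ̄ - 1) + Σᵢ (s - ℓᵢ)` and `p²(γ - 1) < (p² - p - 1)s`, then `γ̄ = 0`, `k = 2`
and `ℓ₁ = ℓ₂ = s/p`. -/
theorem deuring_shafarevich_numerics (p n : ℕ) (hp : p.Prime) (hp3 : 3 ≤ p) (hn : 1 ≤ n)
    (s : ℕ) (hs : s = p ^ n)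
    (γ γb k : ℕ) (hγ : 2 ≤ γ)
    (ℓ : Fin k → ℕ)
    (hℓpow : ∀ i, ∃ m : ℕ, ℓ i = p ^ m)
    (hℓlo : ∀ i, p ≤ ℓ i) (hℓhi : ∀ i, ℓ i ≤ s / p)
    (heq : (γ : ℤ) - 1 = (s : ℤ) * ((γb : ℤ) - 1) + ∑ i : Fin k, ((s : ℤ) - (ℓ i : ℤ)))
    (hineq : p ^ 2 * (γ - 1) < (p ^ 2 - p - 1) * s) :
    γb = 0 ∧ k = 2 ∧ ∀ i, ℓ i = s / p := by
  have hp0 : 0 < p := hp.pos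
  have hp1 : 1 < p := hp.one_lt
  -- cast hineq to ℤ
  have h2 : p + 1 ≤ p ^ 2 := by nlinarith
  have h2' : p ≤ p ^ 2 := by omega
  have h1 : 1 ≤ p ^ 2 - p := by omega
  have hγ1 : 1 ≤ γ := by omega
  zify [h2', h1, hγ1] at hineq
  have hspos : 0 < s := by rw [hs]; positivity
  have hsZ : (0:ℤ) < s := by exact_mod_cast hspos
  have hpZ : (3:ℤ) ≤ p := by exact_mod_cast hp3
  have hγZ : (2:ℤ) ≤ γ := by exact_mod_cast hγ
  have hpsnat : p ≤ s := by rw [hs]; exact Nat.le_self_pow (by omega) p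
  have hps : (p:ℤ) ≤ s := by exact_mod_cast hpsnat
  -- per-term bounds
  have hmul : ∀ i, p * ℓ i ≤ s := by
    intro i
    rw [mul_comm]
    exact (Nat.le_div_iff_mul_le hp0).mp (hℓhi i)
  have hmulZ : ∀ i, (p:ℤ) * (ℓ i) ≤ s := by
    intro i; exact_mod_cast hmul i
  have hloZ : ∀ i, (p:ℤ) ≤ ℓ i := by
    intro i; exact_mod_cast hℓlo i
  have htermlo : ∀ i ∈ Finset.univ (α := Fin k),
      ((p:ℤ) - 1) * s ≤ (p:ℤ) * ((s:ℤ) - ℓ i) := by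
    intro i _
    have := hmulZ i
    nlinarith
  have htermhi : ∀ i ∈ Finset.univ (α := Fin k),
      (s:ℤ) - ℓ i ≤ (s:ℤ) - p := by
    intro i _; have := hloZ i; linarith
  set T : ℤ := ∑ i : Fin k, ((s : ℤ) - (ℓ i : ℤ)) with hT
  have hTlo : (k:ℤ) * (((p:ℤ) - 1) * s) ≤ (p:ℤ) * T := by
    rw [hT, Finset.mul_sum]
    calc (k:ℤ) * (((p:ℤ) - 1) * s)
        = ∑ _i : Fin k, ((p:ℤ) - 1) * s := by
          rw [Finset.sum_const, Finset.card_univ, Fintype.card_fin]; ring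
      _ ≤ _ := Finset.sum_le_sum htermlo
  have hThi : T ≤ (k:ℤ) * ((s:ℤ) - p) := by
    rw [hT]
    calc ∑ i : Fin k, ((s : ℤ) - ℓ i) ≤ ∑ _i : Fin k, ((s:ℤ) - p) :=
          Finset.sum_le_sum htermhi
      _ = (k:ℤ) * ((s:ℤ) - p) := by
          rw [Finset.sum_const, Finset.card_univ, Fintype.card_fin]; ring
  -- Step 1: γb = 0
  have hγb : γb = 0 := by
    by_contra hne
    have hγb1 : (1:ℤ) ≤ γb := by
      have : 1 ≤ γb := Nat.one_le_iff_ne_zero.mpr hne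
      exact_mod_cast this
    rcases Nat.eq_zero_or_pos k with hk0 | hk1
    · subst hk0
      simp only [Finset.univ_eq_empty, Finset.sum_empty] at hT
      rw [hT] at heq
      have hγb2 : (2:ℤ) ≤ γb := by
        by_contra h
        push_neg at h
        have hone : (γb:ℤ) = 1 := by linarith
        rw [hone] at heq
        simp at heq
        linarith
      have hγs : (s:ℤ) ≤ (γ:ℤ) - 1 := by nlinarith
      have hmm : (p:ℤ)^2 * s ≤ (p:ℤ)^2 * ((γ:ℤ) - 1) :=
        mul_le_mul_of_nonneg_left hγs (by positivity)
      nlinarith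
    · have hk1Z : (1:ℤ) ≤ k := by exact_mod_cast hk1
      have h0 : (0:ℤ) ≤ (s:ℤ) * ((γb:ℤ) - 1) := by nlinarith
      have hx : (0:ℤ) ≤ ((p:ℤ)-1)*s := mul_nonneg (by linarith) (by linarith)
      have e1 : ((p:ℤ)-1)*s ≤ (k:ℤ)*(((p:ℤ)-1)*s) := le_mul_of_one_le_left hx hk1Z
      have heqp : (p:ℤ)*((γ:ℤ)-1) = (p:ℤ)*((s:ℤ)*((γb:ℤ)-1)) + (p:ℤ)*T := by
        linear_combination (p:ℤ) * heq
      have e2 : (0:ℤ) ≤ (p:ℤ)*((s:ℤ)*((γb:ℤ)-1)) := mul_nonneg (by linarith) h0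
      have e3 : ((p:ℤ)-1)*s ≤ (p:ℤ)*((γ:ℤ)-1) := by linarith
      have e4 : (p:ℤ)*(((p:ℤ)-1)*s) ≤ (p:ℤ)*((p:ℤ)*((γ:ℤ)-1)) :=
        mul_le_mul_of_nonneg_left e3 (by linarith)
      nlinarith
  subst hγb
  simp only [Nat.cast_zero] at heq
  have heqT : T = (γ:ℤ) - 1 + s := by linarith
  -- Step 2: k = 2
  have hk2 : k = 2 := by
    have hkZlo : (2:ℤ) ≤ k := by
      by_contra h
      push_neg at h
      have hk1 : (k:ℤ) ≤ 1 := by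
        have : k < 2 := by exact_mod_cast h
        have : k ≤ 1 := by omega
        exact_mod_cast this
      have hTs : T ≤ (s:ℤ) - p := by
        calc T ≤ (k:ℤ) * ((s:ℤ) - p) := hThi
          _ ≤ 1 * ((s:ℤ) - p) := by
            apply mul_le_mul_of_nonneg_right hk1 (by linarith)
          _ = (s:ℤ) - p := by ring
      linarith
    have hkZhi : (k:ℤ) ≤ 2 := by
      by_contra h
      push_neg at h
      have hk3 : (3:ℤ) ≤ k := by
        have h' : 2 < k := by exact_mod_cast h
        have : 3 ≤ k := by omega
        exact_mod_cast this
      have hx : (0:ℤ) ≤ ((p:ℤ)-1)*s := mul_nonneg (by linarith) (by linarith)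
      have h3 : 3 * (((p:ℤ) - 1) * s) ≤ (p:ℤ) * T := by
        calc 3 * (((p:ℤ) - 1) * s) ≤ (k:ℤ) * (((p:ℤ) - 1) * s) :=
              mul_le_mul_of_nonneg_right hk3 hx
          _ ≤ (p:ℤ) * T := hTlo
      -- p T = p(γ-1) + ps, so p(γ-1) ≥ (2p-3)s
      have e3 : (2*(p:ℤ)-3)*s ≤ (p:ℤ)*((γ:ℤ)-1) := by nlinarith [heqT]
      have e4 : (p:ℤ)*((2*(p:ℤ)-3)*s) ≤ (p:ℤ)*((p:ℤ)*((γ:ℤ)-1)) :=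
        mul_le_mul_of_nonneg_left e3 (by linarith)
      nlinarith
    have : 2 ≤ k := by exact_mod_cast hkZlo
    have : k ≤ 2 := by exact_mod_cast hkZhi
    omega
  subst hk2
  refine ⟨rfl, rfl, ?_⟩
  -- Step 3: each ℓ i = s / p
  have hsp : s / p = p ^ (n - 1) := by
    rw [hs]
    have hh : p ^ n = p ^ (n - 1) * p := by
      rw [← pow_succ]; congr 1; omega
    rw [hh, Nat.mul_div_cancel _ hp0]
  have hkey : ∀ i : Fin 2, ℓ i ≠ s / p → p ^ 2 * ℓ i ≤ s := by
    intro i hne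
    obtain ⟨m, hm⟩ := hℓpow i
    have hle : ℓ i ≤ p ^ (n - 1) := by rw [← hsp]; exact hℓhi i
    rw [hm] at hle hne ⊢
    rw [hsp] at hne
    have hmn : m ≤ n - 1 := (Nat.pow_le_pow_iff_right hp1).mp hle
    have hmn2 : m + 2 ≤ n := by
      rcases Nat.lt_or_ge m (n-1) with h | h
      · omega
      · exfalso; exact hne (by rw [Nat.le_antisymm hmn h])
    calc p ^ 2 * p ^ m = p ^ (m + 2) := by ring
      _ ≤ p ^ n := Nat.pow_le_pow_right hp0 hmn2
      _ = s := hs.symm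
  have hTtwo : T = ((s:ℤ) - ℓ 0) + ((s:ℤ) - ℓ 1) := by
    rw [hT, Fin.sum_univ_two]
  have hγeq : (γ:ℤ) - 1 = (s:ℤ) - ℓ 0 - ℓ 1 := by
    rw [heqT] at hTtwo; linarith
  have hkeyZ : ∀ i : Fin 2, ℓ i ≠ s / p → ((p:ℤ)^2 * ℓ i ≤ s) := by
    intro i h; exact_mod_cast hkey i h
  have hexp : (p:ℤ)^2 * ((γ:ℤ) - 1) = (p:ℤ)^2*s - (p:ℤ)^2*(ℓ 0) - (p:ℤ)^2*(ℓ 1) := by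
    rw [hγeq]; ring
  have hm0 : (p:ℤ)*((p:ℤ)*(ℓ 0)) ≤ (p:ℤ)*s :=
    mul_le_mul_of_nonneg_left (hmulZ 0) (by linarith)
  have hm1 : (p:ℤ)*((p:ℤ)*(ℓ 1)) ≤ (p:ℤ)*s :=
    mul_le_mul_of_nonneg_left (hmulZ 1) (by linarith)
  intro i
  by_contra hne
  have hsq : (p:ℤ)^2 * ℓ i ≤ s := hkeyZ i hne
  have hi : i = 0 ∨ i = 1 := by omega
  rcases hi with hi | hi <;> subst hi
  · nlinarith [hsq, hm1, hexp, hineq, hsZ]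
  · nlinarith [hsq, hm0, hexp, hineq, hsZ]
end

section
/- Let p be an odd prime, let m ≥ 1 be an integer, and set q = p^m. Let μ = 3 if 3 divides q + 1 and μ = 1 otherwise. If (q + 1)/(2μ) divides p − 2, then q = 5 or q = 17. -/
/-- Arithmetic claim in the lemma ruling out `PSU(3,q)`: for an odd prime `p`, `q = p^m`
with `m ≥ 1`, and `μ = 3` if `3 ∣ q + 1`, `μ = 1` otherwise, if `(q+1)/(2μ)` divides `p - 2`
then `q = 5` or `q = 17`. -/
theorem psu3_arith (p m : ℕ) (hp : p.Prime) (hodd : Odd p) (hm : 1 ≤ m)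
    (q : ℕ) (hq : q = p ^ m)
    (μ : ℕ) (hμ : μ = if 3 ∣ q + 1 then 3 else 1)
    (hdvd : (q + 1) / (2 * μ) ∣ p - 2) :
    q = 5 ∨ q = 17 := by
  have hp2 : 2 ≤ p := hp.two_le
  have hp3 : 3 ≤ p := by
    rcases hodd with ⟨k, hk⟩; omega
  have hqodd : Odd q := by
    rw [hq]; exact hodd.pow
  have h2 : 2 ∣ q + 1 := by
    rcases hqodd with ⟨k, hk⟩; omega
  have h2μ : 2 * μ ∣ q + 1 := by
    by_cases h3 : 3 ∣ q + 1
    · rw [hμ, if_pos h3]; omega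
    · rw [hμ, if_neg h3]; omega
  obtain ⟨d, hd⟩ := h2μ
  have hμpos : 0 < μ := by
    rw [hμ]; split <;> omega
  have hddvd : d ∣ p - 2 := by
    have : (q + 1) / (2 * μ) = d := by
      rw [hd, Nat.mul_div_cancel_left d (by omega)]
    rwa [this] at hdvd
  have hdle : d ≤ p - 2 := Nat.le_of_dvd (by omega) hddvd
  have hμ3 : μ ≤ 3 := by rw [hμ]; split <;> omega
  -- q + 1 ≤ 6 (p - 2)
  have hbound : q + 1 ≤ 6 * (p - 2) := by
    calc q + 1 = 2 * μ * d := hd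
    _ ≤ 6 * (p - 2) := by
      have := Nat.mul_le_mul (by omega : 2 * μ ≤ 6) hdle
      omega
  -- m = 1
  have hm1 : m = 1 := by
    by_contra hm2
    have hm2' : 2 ≤ m := by omega
    have : p ^ 2 ≤ p ^ m := Nat.pow_le_pow_right (by omega) hm2'
    have hsq : p * p ≤ q := by rw [hq]; nlinarith [this]
    rcases Nat.lt_or_ge p 6 with h6 | h6
    · interval_cases p <;> omega
    · have h6m : 6 * p ≤ p * p := Nat.mul_le_mul_right p h6
      have hb2 : q + 13 ≤ 6 * p := by omega
      linarith
  have hqp : q = p := by rw [hq, hm1, pow_one]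
  -- d divides 3
  have hd3 : d ∣ 3 := by
    have h1 : d ∣ q + 1 := ⟨2 * μ, by rw [hd]; ring⟩
    have h1' : d ∣ p + 1 := by rwa [hqp] at h1
    have := Nat.dvd_sub h1' hddvd
    have heq : p + 1 - (p - 2) = 3 := by omega
    rwa [heq] at this
  have hd3' : d = 1 ∨ d = 3 := by
    have h0 : d ≤ 3 := Nat.le_of_dvd (by norm_num) hd3
    interval_cases d <;> revert hd3 <;> decide
  by_cases h3 : 3 ∣ q + 1
  · rw [hμ, if_pos h3] at hd
    omega
  · rw [hμ, if_neg h3] at hd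
    -- q + 1 = 2 * d, d = 1 or 3
    rcases hd3' with rfl | rfl
    · -- q = 1, but q = p ≥ 3
      omega
    · -- q = 5, but then 3 ∣ 6 contradiction
      omega
end

section
/- Let p be an odd prime, let m ≥ 1 be an integer, and set q = p^m. Let μ = 3 if 3 divides q − 1 and μ = 1 otherwise. If (q − 1)/(2μ) divides p − 2, then q = 3 or q = 7. -/
/-- Arithmetic claim in the lemma ruling out `PSL(3,q)`: for an odd prime `p`, `q = p^m`
with `m ≥ 1`, and `μ = 3` if `3 ∣ q - 1`, `μ = 1` otherwise, if `(q-1)/(2μ)` divides `p - 2`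
then `q = 3` or `q = 7`. -/
theorem psl3_arith (p m : ℕ) (hp : p.Prime) (hodd : Odd p) (hm : 1 ≤ m)
    (q : ℕ) (hq : q = p ^ m)
    (μ : ℕ) (hμ : μ = if 3 ∣ q - 1 then 3 else 1)
    (hdvd : (q - 1) / (2 * μ) ∣ p - 2) :
    q = 3 ∨ q = 7 := by
  have hp3 : 3 ≤ p := by
    rcases hodd with ⟨k, hk⟩
    have := hp.two_le
    omega
  have hqodd : Odd q := by rw [hq]; exact hodd.pow
  have h2 : 2 ∣ q - 1 := by
    rcases hqodd with ⟨k, hk⟩; omega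
  have h2μ : 2 * μ ∣ q - 1 := by
    by_cases h3 : 3 ∣ q - 1
    · simp only [hμ, if_pos h3]
      exact (Nat.coprime_two_left.mpr (by decide)).mul_dvd_of_dvd_of_dvd h2 h3
    · simp only [hμ, if_neg h3, mul_one]; exact h2
  have hμpos : 1 ≤ μ ∧ μ ≤ 3 := by
    rw [hμ]; split <;> omega
  have heq : (q - 1) / (2 * μ) * (2 * μ) = q - 1 := Nat.div_mul_cancel h2μ
  have hle : (q - 1) / (2 * μ) ≤ p - 2 := Nat.le_of_dvd (by omega) hdvd
  have hqle : q - 1 ≤ (p - 2) * (2 * μ) := by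
    rw [← heq]; exact Nat.mul_le_mul_right _ hle
  rcases eq_or_lt_of_le hm with hm1 | hm2
  · -- m = 1, q = p
    have hqp : q = p := by rw [hq, ← hm1, pow_one]
    subst hqp
    have hd1 : (q - 1) / (2 * μ) ∣ q - 1 := ⟨2 * μ, heq.symm⟩
    have hd2 : (q - 1) / (2 * μ) ∣ (q - 1) - (q - 2) := Nat.dvd_sub hd1 hdvd
    have : (q - 1) - (q - 2) = 1 := by omega
    rw [this] at hd2
    have hone : (q - 1) / (2 * μ) = 1 := Nat.dvd_one.mp hd2
    rw [hone, one_mul] at heq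
    by_cases h3 : 3 ∣ q - 1
    · right; rw [hμ, if_pos h3] at heq; omega
    · left; rw [hμ, if_neg h3, mul_one] at heq; omega
  · -- m ≥ 2
    exfalso
    have hP : p * p ≤ q := by
      rw [hq]
      calc p * p = p ^ 2 := by ring
        _ ≤ p ^ m := Nat.pow_le_pow_right (by omega) hm2
    have h6 : q - 1 ≤ (p - 2) * 6 := by
      calc q - 1 ≤ (p - 2) * (2 * μ) := hqle
        _ ≤ (p - 2) * 6 := Nat.mul_le_mul_left _ (by omega)
    have key : p * p + 11 ≤ 6 * p := by omega
    nlinarith [key, hp3]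
end

section
/- Let p be a prime, K a field of characteristic p, and f ∈ K[X,Y] a polynomial whose degree in X is at most p and whose degree in Y is at most p. Suppose f(X+1, Y) = f(X, Y) and f(X, Y+1) = f(X, Y), and that the one-variable polynomials f(X, 0) and f(0, Y) each have degree at most p − 1. Then there exist c, u ∈ K such that f = c·(X^p − X)(Y^p − Y) + u. -/
open MvPolynomial

section Uni
open Polynomial

lemma key_dvd {R : Type*} [CommRing R] [IsDomain R] {p : ℕ} (hp : p.Prime) [CharP R p]
    (g : R[X]) (hg : Polynomial.aeval (Polynomial.X + 1) g = g) : p ∣ g.natDegree := by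
  rcases Nat.eq_zero_or_pos g.natDegree with h0 | hn
  · simp [h0]
  have hg0 : g ≠ 0 := fun h => by simp [h] at hn
  set n := g.natDegree with hn'
  have htaylor : taylor 1 g = g := by
    have : taylor 1 g = Polynomial.aeval (Polynomial.X + 1) g := by
      rw [taylor_apply, Polynomial.aeval_def, Polynomial.algebraMap_eq]
      simp [Polynomial.comp]
    rw [this, hg]
  have hc := congrArg (fun q => Polynomial.coeff q (n - 1)) htaylor
  simp only [taylor_coeff] at hc
  have hdeg : (Polynomial.hasseDeriv (n - 1) g).natDegree < 2 := by
    have := Polynomial.natDegree_hasseDeriv_le g (n - 1)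
    omega
  have heval : (Polynomial.hasseDeriv (n - 1) g).eval 1 =
      (Polynomial.hasseDeriv (n - 1) g).coeff 0 + (Polynomial.hasseDeriv (n - 1) g).coeff 1 := by
    rw [Polynomial.eval_eq_sum_range' hdeg]
    simp [Finset.sum_range_succ]
  have hc0 : (Polynomial.hasseDeriv (n - 1) g).coeff 0 = g.coeff (n - 1) := by
    simp [Polynomial.hasseDeriv_coeff]
  have hc1 : (Polynomial.hasseDeriv (n - 1) g).coeff 1 = (n : R) * g.coeff n := by
    have h1 : 1 + (n - 1) = n := by omega
    have h2 := Polynomial.hasseDeriv_coeff (k := n - 1) (f := g) 1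
    rw [h1] at h2
    rw [h2]
    congr 1
    rw [Nat.choose_symm (by omega)]
    simp [Nat.sub_sub_self (by omega : 1 ≤ n)]
  have hkey : g.coeff (n - 1) + (n : R) * g.coeff n = g.coeff (n - 1) := by
    rw [heval, hc0, hc1] at hc; exact hc
  have hzero : (n : R) * g.coeff n = 0 := by
    have := hkey
    rwa [add_eq_left] at this
  have hlc : g.coeff n ≠ 0 := Polynomial.leadingCoeff_ne_zero.mpr hg0
  have hnz : (n : R) = 0 := by
    rcases mul_eq_zero.mp hzero with h | h
    · exact h
    · exact absurd h hlc
  exact (CharP.cast_eq_zero_iff R p n).mp hnz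

lemma uni {R : Type*} [CommRing R] [IsDomain R] {p : ℕ} (hp : p.Prime) [CharP R p]
    (g : R[X]) (hd : g.natDegree ≤ p)
    (hg : Polynomial.aeval (Polynomial.X + 1) g = g) :
    ∃ a b : R, g = Polynomial.C a * (Polynomial.X ^ p - Polynomial.X) + Polynomial.C b := by
  have hdvd := key_dvd hp g hg
  have hp0 : 0 < p := hp.pos
  have hcases : g.natDegree = 0 ∨ g.natDegree = p := by
    rcases Nat.eq_zero_or_pos g.natDegree with h | h
    · exact Or.inl h
    · exact Or.inr (Nat.le_antisymm hd (Nat.le_of_dvd h hdvd))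
  rcases hcases with h | h
  · refine ⟨0, g.coeff 0, ?_⟩
    rw [map_zero, zero_mul, zero_add]
    exact Polynomial.eq_C_of_natDegree_eq_zero h
  · set a := g.coeff p with ha
    set h' := g - Polynomial.C a * (Polynomial.X ^ p - Polynomial.X) with hh
    have hCharPoly : CharP R[X] p := inferInstance
    haveI : Fact p.Prime := ⟨hp⟩
    have hinv : Polynomial.aeval (Polynomial.X + 1) h' = h' := by
      rw [hh, map_sub, hg, map_mul, map_sub, map_pow, Polynomial.aeval_X, Polynomial.aeval_C]
      congr 2
      rw [add_pow_char]
      simp [Polynomial.algebraMap_eq]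
    have hcoeffp : h'.coeff p = 0 := by
      simp [hh, ha, Polynomial.coeff_X_pow, Polynomial.coeff_X, (hp.one_lt.ne : 1 ≠ p)]
    have hdle : h'.natDegree ≤ p := by
      apply le_trans (Polynomial.natDegree_sub_le _ _)
      apply max_le (h.le)
      apply le_trans (Polynomial.natDegree_mul_le)
      simp only [Polynomial.natDegree_C, zero_add]
      apply le_trans (Polynomial.natDegree_sub_le _ _)
      simp [Polynomial.natDegree_X_pow, Polynomial.natDegree_X]
      omega
    have hdlt : h'.natDegree < p := by
      rcases lt_or_eq_of_le hdle with hlt | heq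
      · exact hlt
      · exfalso
        have hne : h' ≠ 0 := by
          intro h0
          rw [h0] at heq
          simp at heq
          omega
        have := Polynomial.leadingCoeff_ne_zero.mpr hne
        rw [Polynomial.leadingCoeff, heq, hcoeffp] at this
        exact this rfl
    have hdvd' := key_dvd hp h' hinv
    have hdeg0 : h'.natDegree = 0 := by
      rcases Nat.eq_zero_or_pos h'.natDegree with h0 | hpos
      · exact h0
      · exact absurd hdlt (not_lt.mpr (Nat.le_of_dvd hpos hdvd'))
    refine ⟨a, h'.coeff 0, ?_⟩
    have : h' = Polynomial.C (h'.coeff 0) := Polynomial.eq_C_of_natDegree_eq_zero hdeg0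
    rw [hh] at this
    linear_combination this

end Uni

section Transfer

variable {K : Type*} [CommSemiring K]

lemma eX1 : finSuccEquiv K 1 (X 1) = Polynomial.C (X 0) := by
  rw [← Fin.succ_zero_eq_one, finSuccEquiv_X_succ]

lemma eCC {n : ℕ} (a : K) : finSuccEquiv K n (C a) = Polynomial.C (C a) := by
  have h := RingHom.congr_fun (finSuccEquiv_comp_C_eq_C (R := K) n) a
  simp only [RingHom.coe_comp, Function.comp_apply] at h
  apply (finSuccEquiv K n).symm.injective
  simpa using h.symm

lemma transferX (f : MvPolynomial (Fin 2) K) :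
    finSuccEquiv K 1 (aeval ![X 0 + 1, X 1] f)
      = Polynomial.aeval (Polynomial.X + 1) (finSuccEquiv K 1 f) := by
  have h : ((Polynomial.aeval (Polynomial.X + 1 :
        Polynomial (MvPolynomial (Fin 1) K))).restrictScalars K).comp
        (finSuccEquiv K 1).toAlgHom
      = (finSuccEquiv K 1).toAlgHom.comp (aeval ![X 0 + 1, X 1]) := by
    apply MvPolynomial.algHom_ext
    intro i
    induction i using Fin.cases with
    | zero => simp [finSuccEquiv_X_zero]
    | succ j =>
      have hj : j = 0 := Subsingleton.elim _ _
      subst hj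
      simp [finSuccEquiv_X_succ, Matrix.cons_val_succ, eX1,
        Polynomial.aeval_C, Polynomial.algebraMap_eq]
  exact (congrFun (congrArg DFunLike.coe h) f).symm

lemma transferX0 (A : MvPolynomial (Fin 1) K) :
    finSuccEquiv K 0 (aeval ![X 0 + 1] A)
      = Polynomial.aeval (Polynomial.X + 1) (finSuccEquiv K 0 A) := by
  have h : ((Polynomial.aeval (Polynomial.X + 1 :
        Polynomial (MvPolynomial (Fin 0) K))).restrictScalars K).comp
        (finSuccEquiv K 0).toAlgHom
      = (finSuccEquiv K 0).toAlgHom.comp (aeval ![X 0 + 1]) := by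
    apply MvPolynomial.algHom_ext
    intro i
    fin_cases i
    simp [finSuccEquiv_X_zero]
  exact (congrFun (congrArg DFunLike.coe h) A).symm

lemma transferY (f : MvPolynomial (Fin 2) K) :
    finSuccEquiv K 1 (aeval ![X 0, X 1 + 1] f)
      = Polynomial.mapAlgHom (aeval ![X 0 + 1] : MvPolynomial (Fin 1) K →ₐ[K] _)
          (finSuccEquiv K 1 f) := by
  have h : (Polynomial.mapAlgHom
          (aeval ![X 0 + 1] : MvPolynomial (Fin 1) K →ₐ[K] _)).comp
        (finSuccEquiv K 1).toAlgHom
      = (finSuccEquiv K 1).toAlgHom.comp (aeval ![X 0, X 1 + 1]) := by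
    apply MvPolynomial.algHom_ext
    intro i
    induction i using Fin.cases with
    | zero =>
      simp [finSuccEquiv_X_zero, Polynomial.coe_mapAlgHom]
    | succ j =>
      have hj : j = 0 := Subsingleton.elim _ _
      subst hj
      simp [finSuccEquiv_X_succ, Matrix.cons_val_succ, eX1,
        Polynomial.coe_mapAlgHom]
  exact (congrFun (congrArg DFunLike.coe h) f).symm

end Transfer

section Level1

variable {p : ℕ} {K : Type*} [Field K]

lemma level1 (hp : p.Prime) [CharP K p] (A : MvPolynomial (Fin 1) K)
    (hdeg : A.degreeOf 0 ≤ p) (hinv : aeval ![X 0 + 1] A = A) :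
    ∃ a b : K, A = C a * (X 0 ^ p - X 0) + C b := by
  set A' := finSuccEquiv K 0 A with hA'
  have hdeg' : A'.natDegree ≤ p := by
    rw [hA', natDegree_finSuccEquiv]; exact hdeg
  have hinv' : Polynomial.aeval (Polynomial.X + 1) A' = A' := by
    rw [hA', ← transferX0, hinv]
  obtain ⟨a', b', h⟩ := uni hp A' hdeg' hinv'
  obtain ⟨a, rfl⟩ := C_surjective (Fin 0) a'
  obtain ⟨b, rfl⟩ := C_surjective (Fin 0) b'
  refine ⟨a, b, (finSuccEquiv K 0).injective ?_⟩
  rw [← hA', h]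
  simp [map_add, map_mul, map_sub, map_pow, finSuccEquiv_X_zero, eCC]

end Level1

/-- Computational core of the paper's genus-4 uniqueness proof: a polynomial
`f ∈ K[X,Y]` of degree at most `p` in each variable, invariant under `X ↦ X+1` and
`Y ↦ Y+1`, and such that `f(X,0)` and `f(0,Y)` have degree at most `p-1`, must be of the
form `c·(X^p - X)(Y^p - Y) + u`. -/
theorem translation_invariant_poly (p : ℕ) (hp : p.Prime)
    (K : Type*) [Field K] [CharP K p]
    (f : MvPolynomial (Fin 2) K)
    (hdX : f.degreeOf 0 ≤ p) (hdY : f.degreeOf 1 ≤ p)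
    (hX1 : aeval ![X 0 + 1, X 1] f = f)
    (hY1 : aeval ![X 0, X 1 + 1] f = f)
    (hX0 : (aeval ![X 0, (0 : MvPolynomial (Fin 2) K)] f).degreeOf 0 ≤ p - 1)
    (h0Y : (aeval ![(0 : MvPolynomial (Fin 2) K), X 1] f).degreeOf 1 ≤ p - 1) :
    ∃ c u : K, f = C c * ((X 0 ^ p - X 0) * (X 1 ^ p - X 1)) + C u := by
  haveI : Fact p.Prime := ⟨hp⟩
  set g := finSuccEquiv K 1 f with hg
  have hgdeg : g.natDegree ≤ p := by rw [hg, natDegree_finSuccEquiv]; exact hdX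
  have hginv : Polynomial.aeval (Polynomial.X + 1) g = g := by
    rw [hg, ← transferX, hX1]
  obtain ⟨A, B, hAB⟩ := uni hp g hgdeg hginv
  -- coefficient extraction lemmas
  have cp : ∀ U V : MvPolynomial (Fin 1) K,
      (Polynomial.C U * (Polynomial.X ^ p - Polynomial.X) + Polynomial.C V).coeff p = U := by
    intro U V
    simp [Polynomial.coeff_X_pow, Polynomial.coeff_X, Polynomial.coeff_C,
      hp.ne_zero, hp.pos.ne, hp.one_lt.ne, hp.one_lt.ne']
  have c0 : ∀ U V : MvPolynomial (Fin 1) K,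
      (Polynomial.C U * (Polynomial.X ^ p - Polynomial.X) + Polynomial.C V).coeff 0 = V := by
    intro U V
    simp [Polynomial.coeff_X_pow, Polynomial.coeff_X, Polynomial.coeff_C,
      hp.ne_zero, hp.pos.ne, hp.one_lt.ne, hp.one_lt.ne']
  -- invariance of A and B under X0 ↦ X0 + 1
  have hmap := transferY f
  rw [hY1, ← hg, hAB] at hmap
  simp only [Polynomial.coe_mapAlgHom, Polynomial.map_add, Polynomial.map_mul,
    Polynomial.map_sub, Polynomial.map_pow, Polynomial.map_C, Polynomial.map_X] at hmap
  have hAinv : aeval ![X 0 + 1] A = A := by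
    have h' := congrArg (fun q => q.coeff p) hmap
    simp only [cp] at h'
    exact h'.symm
  have hBinv : aeval ![X 0 + 1] B = B := by
    have h' := congrArg (fun q => q.coeff 0) hmap
    simp only [c0] at h'
    exact h'.symm
  -- degree bounds on A and B
  have hsucc : (0 : Fin 1).succ = 1 := rfl
  have hAdeg : A.degreeOf 0 ≤ p := by
    have h1 := degreeOf_coeff_finSuccEquiv f 0 p
    rw [hsucc, ← hg] at h1
    have h2 : g.coeff p = A := by rw [hAB]; exact cp A B
    rw [h2] at h1
    exact le_trans h1 hdY
  have hBdeg : B.degreeOf 0 ≤ p := by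
    have h1 := degreeOf_coeff_finSuccEquiv f 0 0
    rw [hsucc, ← hg] at h1
    have h2 : g.coeff 0 = B := by rw [hAB]; exact c0 A B
    rw [h2] at h1
    exact le_trans h1 hdY
  obtain ⟨a₁, b₁, hA⟩ := level1 hp A hAdeg hAinv
  obtain ⟨a₂, b₂, hB⟩ := level1 hp B hBdeg hBinv
  -- assemble the four-term form of f
  have hf4 : f = C a₁ * ((X 0 ^ p - X 0) * (X 1 ^ p - X 1)) + C b₁ * (X 0 ^ p - X 0)
      + C a₂ * (X 1 ^ p - X 1) + C b₂ := by
    apply (finSuccEquiv K 1).injective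
    rw [← hg, hAB, hA, hB]
    simp only [map_add, map_mul, map_sub, map_pow, finSuccEquiv_X_zero, eX1, eCC]
    push_cast
    ring
  -- boundary conditions
  have hb₁ : b₁ = 0 := by
    have hx0 : aeval ![X 0, (0 : MvPolynomial (Fin 2) K)] f
        = C b₁ * (X 0 ^ p - X 0) + C b₂ := by
      rw [hf4]
      simp [map_add, map_mul, map_sub, map_pow, aeval_X, aeval_C,
        MvPolynomial.algebraMap_eq, zero_pow hp.ne_zero]
    rw [hx0] at hX0
    by_contra hb
    have hcoeff : coeff (Finsupp.single (0 : Fin 2) p)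
        (C b₁ * (X 0 ^ p - X 0) + C b₂ : MvPolynomial (Fin 2) K) = b₁ := by
      have h1 : (Finsupp.single (0 : Fin 2) 1) ≠ Finsupp.single (0 : Fin 2) p := by
        intro h
        exact hp.one_lt.ne (Finsupp.single_injective 0 h)
      have h2 : (Finsupp.single (0 : Fin 2) p) ≠ 0 := by
        simp [Finsupp.single_eq_zero, hp.ne_zero]
      classical
      simp [coeff_add, coeff_C_mul, coeff_sub, X_pow_eq_monomial, coeff_monomial,
        coeff_X', h1, coeff_C, h2, Ne.symm h2]
    have hmem : Finsupp.single (0 : Fin 2) p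
        ∈ (C b₁ * (X 0 ^ p - X 0) + C b₂ : MvPolynomial (Fin 2) K).support := by
      rw [mem_support_iff, hcoeff]; exact hb
    have := monomial_le_degreeOf 0 hmem
    simp [Finsupp.single_eq_same] at this
    have hple := le_trans this hX0
    have hppos := hp.pos
    exact absurd hple (by omega)
  have ha₂ : a₂ = 0 := by
    have hy0 : aeval ![(0 : MvPolynomial (Fin 2) K), X 1] f
        = C a₂ * (X 1 ^ p - X 1) + C b₂ := by
      rw [hf4]
      simp [map_add, map_mul, map_sub, map_pow, aeval_X, aeval_C,
        MvPolynomial.algebraMap_eq, zero_pow hp.ne_zero]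
    rw [hy0] at h0Y
    by_contra hb
    have hcoeff : coeff (Finsupp.single (1 : Fin 2) p)
        (C a₂ * (X 1 ^ p - X 1) + C b₂ : MvPolynomial (Fin 2) K) = a₂ := by
      have h1 : (Finsupp.single (1 : Fin 2) 1) ≠ Finsupp.single (1 : Fin 2) p := by
        intro h
        exact hp.one_lt.ne (Finsupp.single_injective 1 h)
      have h2 : (Finsupp.single (1 : Fin 2) p) ≠ 0 := by
        simp [Finsupp.single_eq_zero, hp.ne_zero]
      classical
      simp [coeff_add, coeff_C_mul, coeff_sub, X_pow_eq_monomial, coeff_monomial,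
        coeff_X', h1, coeff_C, h2, Ne.symm h2]
    have hmem : Finsupp.single (1 : Fin 2) p
        ∈ (C a₂ * (X 1 ^ p - X 1) + C b₂ : MvPolynomial (Fin 2) K).support := by
      rw [mem_support_iff, hcoeff]; exact hb
    have := monomial_le_degreeOf 1 hmem
    simp [Finsupp.single_eq_same] at this
    have hple := le_trans this h0Y
    have hppos := hp.pos
    exact absurd hple (by omega)
  refine ⟨a₁, b₂, ?_⟩
  rw [hf4, hb₁, ha₂]
  simp
end
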